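/- arXiv:1212.1811 — 8 statements merged into one kernel-verified Lean document; each statement's English description precedes it below -/
import Mathlib

section
/- The image of the regular map f : ℝ² → ℝ², f(x,y) = ((xy−1)² + x², 1/((xy−1)² + x²)), is the set S = {(a,b) ∈ ℝ² : a > 0 and a·b = 1}. -/
theorem stmt7 :
    Set.range (fun p : ℝ × ℝ =>
        ((p.1 * p.2 - 1) ^ 2 + p.1 ^ 2, ((p.1 * p.2 - 1) ^ 2 + p.1 ^ 2)⁻¹)) =
      {q : ℝ × ℝ | 0 < q.1 ∧ q.1 * q.2 = 1} := by
  ext q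
  constructor
  · rintro ⟨⟨x, y⟩, rfl⟩
    have hpos : 0 < (x * y - 1) ^ 2 + x ^ 2 := by
      rcases eq_or_ne x 0 with hx | hx
      · simp [hx]
      · positivity
    exact ⟨hpos, mul_inv_cancel₀ hpos.ne'⟩
  · rintro ⟨ha, hab⟩
    refine ⟨(Real.sqrt q.1, 1 / Real.sqrt q.1), ?_⟩
    have hs : 0 < Real.sqrt q.1 := Real.sqrt_pos.mpr ha
    have h1 : Real.sqrt q.1 * (1 / Real.sqrt q.1) = 1 := by
      field_simp
    have h2 : Real.sqrt q.1 ^ 2 = q.1 := Real.sq_sqrt ha.le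
    have hb : q.2 = q.1⁻¹ := by
      field_simp
      linarith [hab]
    simp only [h1, h2]
    have : q = (q.1, q.2) := rfl
    rw [this, hb]
    norm_num
end

section
/- The image of the regular map f : ℝ² → ℝ², f(x,y) = (x²/(1+y²), y²/(1+x²)), is the set S = {(a,b) ∈ ℝ² : a ≥ 0, b ≥ 0, a·b < 1}. -/
theorem stmt9 :
    Set.range (fun p : ℝ × ℝ => (p.1 ^ 2 / (1 + p.2 ^ 2), p.2 ^ 2 / (1 + p.1 ^ 2))) =
      {q : ℝ × ℝ | 0 ≤ q.1 ∧ 0 ≤ q.2 ∧ q.1 * q.2 < 1} := by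
  ext ⟨a, b⟩
  simp only [Set.mem_range, Set.mem_setOf_eq, Prod.mk.injEq, Prod.exists]
  constructor
  · rintro ⟨x, y, hx, hy⟩
    subst hx; subst hy
    have h1 : (0:ℝ) < 1 + y ^ 2 := by positivity
    have h2 : (0:ℝ) < 1 + x ^ 2 := by positivity
    refine ⟨by positivity, by positivity, ?_⟩
    rw [div_mul_div_comm, div_lt_one (by positivity)]
    nlinarith [sq_nonneg x, sq_nonneg y]
  · rintro ⟨ha, hb, hab⟩
    have hd : (0:ℝ) < 1 - a * b := by linarith
    set x := Real.sqrt (a * (1 + b) / (1 - a * b)) with hxdef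
    set y := Real.sqrt (b * (1 + a) / (1 - a * b)) with hydef
    have hx2 : x ^ 2 = a * (1 + b) / (1 - a * b) := by
      rw [hxdef, Real.sq_sqrt (by positivity)]
    have hy2 : y ^ 2 = b * (1 + a) / (1 - a * b) := by
      rw [hydef, Real.sq_sqrt (by positivity)]
    refine ⟨x, y, ?_, ?_⟩
    · rw [hx2, hy2]
      have : 1 + b * (1 + a) / (1 - a * b) = (1 + b) / (1 - a * b) := by
        rw [eq_div_iff hd.ne', add_mul, div_mul_cancel₀ _ hd.ne']; ring
      have h1b : (1:ℝ) + b ≠ 0 := by positivity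
      rw [this]
      field_simp
    · rw [hx2, hy2]
      have : 1 + a * (1 + b) / (1 - a * b) = (1 + a) / (1 - a * b) := by
        field_simp; ring
      have h1a : (1:ℝ) + a ≠ 0 := by positivity
      rw [this]
      field_simp
      rw [mul_div_assoc, div_self (by rw [mul_comm]; exact hd.ne'), mul_one]
end

section
/- Let S = {(a,b) ∈ ℝ² : a ≥ 0, b ≥ 0, a·b < 1}. Then S_∞ := Cl_{ℝP²}(S) ∩ {x₀ = 0} = {(0:1:0), (0:0:1)}, which is disconnected. -/
open Projectivization Filter Topology Set

noncomputable section

instance (K V : Type*) [DivisionRing K] [AddCommGroup V] [Module K V] [TopologicalSpace V] :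
    TopologicalSpace (Projectivization K V) := by
  unfold Projectivization; infer_instance

/-- The embedding of the affine plane `ℝ²` into `ℝP²` as the chart `{x₀ = 1}`. -/
def embR2 (p : ℝ × ℝ) : Projectivization ℝ (Fin 3 → ℝ) :=
  Projectivization.mk ℝ ![1, p.1, p.2] (by intro h; have := congrFun h 0; simp at this)

/-- The line at infinity `{x₀ = 0}` of `ℝP²`. -/
def lineAtInf : Set (Projectivization ℝ (Fin 3 → ℝ)) := {q | q.rep 0 = 0}

/-- The set of points at infinity of `S ⊆ ℝ²`: the closure of `S` in `ℝP²`
intersected with the line at infinity. -/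
def ptsAtInf (S : Set (ℝ × ℝ)) : Set (Projectivization ℝ (Fin 3 → ℝ)) :=
  closure (embR2 '' S) ∩ lineAtInf

lemma Dpos (v : Fin 3 → ℝ) (hv : v ≠ 0) : 0 < v 0^2 + v 1^2 + v 2^2 := by
  obtain ⟨i, hi⟩ := Function.ne_iff.mp hv
  fin_cases i <;> simp at hi <;> nlinarith [sq_nonneg (v 0), sq_nonneg (v 1), sq_nonneg (v 2), pow_pos (abs_pos.mpr hi) 2, sq_abs (v 0), sq_abs (v 1), sq_abs (v 2)]

/-- Lift of a scale-invariant fraction `n v / ‖v‖²` (n homogeneous of degree 2). -/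
def liftFrac (n : (Fin 3 → ℝ) → ℝ) (hn : ∀ (t : ℝ) (v : Fin 3 → ℝ), n (t • v) = t^2 * n v) :
    Projectivization ℝ (Fin 3 → ℝ) → ℝ :=
  Projectivization.lift (fun v => n v.1 / ((v.1 0)^2 + (v.1 1)^2 + (v.1 2)^2)) (by
    rintro ⟨a, ha⟩ ⟨b, hb⟩ t (h : a = t • b)
    have ht : t ≠ 0 := by rintro rfl; simp at h; exact ha h
    subst h
    simp only [Pi.smul_apply, smul_eq_mul, hn]
    rw [mul_pow, mul_pow, mul_pow]
    rw [show t^2 * (b 0)^2 + t^2 * (b 1)^2 + t^2 * (b 2)^2 = t^2 * ((b 0)^2 + (b 1)^2 + (b 2)^2) by ring]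
    rw [mul_div_mul_left _ _ (pow_ne_zero 2 ht)])

lemma liftFrac_mk (n : (Fin 3 → ℝ) → ℝ) (hn) (v : Fin 3 → ℝ) (hv : v ≠ 0) :
    liftFrac n hn (Projectivization.mk ℝ v hv) = n v / ((v 0)^2 + (v 1)^2 + (v 2)^2) := rfl

lemma liftFrac_cont (n : (Fin 3 → ℝ) → ℝ) (hn) (hc : Continuous n) :
    Continuous (liftFrac n hn) := by
  apply Continuous.quotient_lift
  apply Continuous.div
  · exact hc.comp continuous_subtype_val
  · have : ∀ i : Fin 3, Continuous fun v : {v : Fin 3 → ℝ // v ≠ 0} => v.1 i := fun i => (continuous_apply i).comp continuous_subtype_val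
    exact (((this 0).pow 2).add ((this 1).pow 2)).add ((this 2).pow 2)
  · exact fun v => ne_of_gt (Dpos v.1 v.2)

def Gf : Projectivization ℝ (Fin 3 → ℝ) → ℝ :=
  liftFrac (fun v => v 1 * v 2) (by intro t v; simp [Pi.smul_apply]; ring)
def Hf : Projectivization ℝ (Fin 3 → ℝ) → ℝ :=
  liftFrac (fun v => (v 0)^2) (by intro t v; simp [Pi.smul_apply]; ring)
def Jf : Projectivization ℝ (Fin 3 → ℝ) → ℝ :=
  liftFrac (fun v => (v 1)^2) (by intro t v; simp [Pi.smul_apply]; ring)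

lemma Gf_cont : Continuous Gf := liftFrac_cont _ _ (by fun_prop)
lemma Hf_cont : Continuous Hf := liftFrac_cont _ _ (by fun_prop)
lemma Jf_cont : Continuous Jf := liftFrac_cont _ _ (by fun_prop)


abbrev Av : Projectivization ℝ (Fin 3 → ℝ) :=
  Projectivization.mk ℝ ![0, 1, 0] (by intro h; have := congrFun h 1; simp at this)
abbrev Bv : Projectivization ℝ (Fin 3 → ℝ) :=
  Projectivization.mk ℝ ![0, 0, 1] (by intro h; have := congrFun h 2; simp at this)

lemma rep_eq_smul (q : Projectivization ℝ (Fin 3 → ℝ)) (v : Fin 3 → ℝ) (hv : v ≠ 0)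
    (h : q = Projectivization.mk ℝ v hv) : ∃ a : ℝˣ, q.rep = (a : ℝ) • v := by
  have h2 : Projectivization.mk ℝ q.rep q.rep_nonzero = Projectivization.mk ℝ v hv := by
    rw [Projectivization.mk_rep]; exact h
  obtain ⟨a, ha⟩ := (Projectivization.mk_eq_mk_iff ℝ _ _ _ _).mp h2
  exact ⟨a, ha.symm⟩

lemma Av_rep0 : Av.rep 0 = 0 := by
  obtain ⟨a, ha⟩ := rep_eq_smul Av ![0,1,0] _ rfl
  rw [ha]; simp

lemma Bv_rep0 : Bv.rep 0 = 0 := by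
  obtain ⟨a, ha⟩ := rep_eq_smul Bv ![0,0,1] _ rfl
  rw [ha]; simp

lemma Av_ne_Bv : Av ≠ Bv := by
  intro h
  obtain ⟨a, ha⟩ := (Projectivization.mk_eq_mk_iff ℝ _ _ _ _).mp h
  have := congrFun ha 1
  simp at this

-- the path lemma: Av is in the closure of the image of S
lemma path_mem_closure (w : ℝ → Fin 3 → ℝ) (hw : ∀ t, w t ≠ 0) (hc : Continuous w)
    (S : Set (ℝ × ℝ)) (hS : ∀ t ∈ Ioi (0:ℝ), Projectivization.mk ℝ (w t) (hw t) ∈ embR2 '' S) :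
    Projectivization.mk ℝ (w 0) (hw 0) ∈ closure (embR2 '' S) := by
  set f : ℝ → Projectivization ℝ (Fin 3 → ℝ) := fun t => Projectivization.mk ℝ (w t) (hw t) with hf
  have hfc : Continuous f := by
    have : Continuous fun t => (⟨w t, hw t⟩ : {v : Fin 3 → ℝ // v ≠ 0}) :=
      hc.subtype_mk _
    exact continuous_quotient_mk'.comp this
  have h0 : (0:ℝ) ∈ closure (Ioi (0:ℝ)) := by simp [closure_Ioi]
  have : f 0 ∈ closure (f '' Ioi 0) :=
    image_closure_subset_closure_image hfc ⟨0, h0, rfl⟩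
  refine closure_mono ?_ this
  rintro q ⟨t, ht, rfl⟩
  exact hS t ht

theorem stmt10 :
    (ptsAtInf {q : ℝ × ℝ | 0 ≤ q.1 ∧ 0 ≤ q.2 ∧ q.1 * q.2 < 1} =
      {Projectivization.mk ℝ ![0, 1, 0] (by intro h; have := congrFun h 1; simp at this),
       Projectivization.mk ℝ ![0, 0, 1] (by intro h; have := congrFun h 2; simp at this)}) ∧
    ¬ IsConnected (ptsAtInf {q : ℝ × ℝ | 0 ≤ q.1 ∧ 0 ≤ q.2 ∧ q.1 * q.2 < 1}) := by
  set S : Set (ℝ × ℝ) := {q : ℝ × ℝ | 0 ≤ q.1 ∧ 0 ≤ q.2 ∧ q.1 * q.2 < 1} with hSdef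
  have hmain : ptsAtInf S = {Av, Bv} := by
    apply Set.Subset.antisymm
    · -- ⊆ : closed-set argument
      rintro q ⟨hqcl, hq0⟩
      have hC : closure (embR2 '' S) ⊆ {q | 0 ≤ Gf q ∧ Gf q ≤ Hf q} := by
        apply closure_minimal
        · rintro x ⟨⟨a, b⟩, ⟨ha, hb, hab⟩, rfl⟩
          have hD : (0:ℝ) < (![1,a,b] 0)^2 + (![1,a,b] 1)^2 + (![1,a,b] 2)^2 :=
            Dpos _ (by intro h; have := congrFun h 0; simp at this)
          constructor
          · show 0 ≤ Gf (embR2 (a, b))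
            rw [embR2, Gf, liftFrac_mk]
            exact div_nonneg (by simp; positivity) hD.le
          · show Gf (embR2 (a, b)) ≤ Hf (embR2 (a, b))
            rw [embR2, Gf, Hf, liftFrac_mk, liftFrac_mk]
            rw [div_le_div_iff_of_pos_right hD]
            simpa using hab.le
        · exact IsClosed.inter (isClosed_le continuous_const Gf_cont)
            (isClosed_le Gf_cont Hf_cont)
      obtain ⟨hG0, hGH⟩ := hC hqcl
      have hqmk : q = Projectivization.mk ℝ q.rep q.rep_nonzero := (Projectivization.mk_rep q).symm
      have hD : (0:ℝ) < (q.rep 0)^2 + (q.rep 1)^2 + (q.rep 2)^2 := Dpos _ q.rep_nonzero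
      rw [hqmk, Gf, liftFrac_mk] at hG0
      rw [hqmk, Gf, Hf, liftFrac_mk, liftFrac_mk] at hGH
      have h0 : q.rep 0 = 0 := hq0
      have hGH' : q.rep 1 * q.rep 2 / ((q.rep 0)^2 + (q.rep 1)^2 + (q.rep 2)^2) ≤ 0 := by
        refine le_trans hGH (le_of_eq ?_)
        rw [h0]; norm_num
      have h12 : q.rep 1 * q.rep 2 = 0 := by
        have : q.rep 1 * q.rep 2 / ((q.rep 0)^2 + (q.rep 1)^2 + (q.rep 2)^2) = 0 :=
          le_antisymm hGH' hG0
        exact (div_eq_zero_iff.mp this).resolve_right hD.ne'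
      rcases mul_eq_zero.mp h12 with h1 | h2
      · -- q = Bv
        right
        have h2ne : q.rep 2 ≠ 0 := by
          intro h2
          apply q.rep_nonzero
          funext i; fin_cases i <;> simpa [h0, h1, h2]
        rw [hqmk]
        rw [mem_singleton_iff, Projectivization.mk_eq_mk_iff']
        exact ⟨q.rep 2, by funext i; fin_cases i <;> simp [h0, h1]⟩
      · -- q = Av
        left
        have h1ne : q.rep 1 ≠ 0 := by
          intro h1
          apply q.rep_nonzero
          funext i; fin_cases i <;> simpa [h0, h1, h2]
        rw [hqmk]
        rw [Projectivization.mk_eq_mk_iff']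
        exact ⟨q.rep 1, by funext i; fin_cases i <;> simp [h0, h2]⟩
    · -- ⊇
      rintro q (rfl | rfl)
      · constructor
        · have hw : ∀ t : ℝ, (![t, 1, 0] : Fin 3 → ℝ) ≠ 0 := by
            intro t h; have := congrFun h 1; simp at this
          have := path_mem_closure (fun t => ![t, 1, 0]) hw
            (by refine continuous_pi fun i => ?_; fin_cases i <;> simp <;> continuity) S
            (by
              intro t ht
              refine ⟨(t⁻¹, 0), ⟨inv_nonneg.mpr (mem_Ioi.mp ht).le, le_refl _, by simp⟩, ?_⟩
              rw [embR2, Projectivization.mk_eq_mk_iff']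
              refine ⟨t⁻¹, ?_⟩
              funext i; fin_cases i <;>
                simp [inv_mul_cancel₀ (ne_of_gt (mem_Ioi.mp ht))])
          exact this
        · exact Av_rep0
      · constructor
        · have hw : ∀ t : ℝ, (![t, 0, 1] : Fin 3 → ℝ) ≠ 0 := by
            intro t h; have := congrFun h 2; simp at this
          have := path_mem_closure (fun t => ![t, 0, 1]) hw
            (by refine continuous_pi fun i => ?_; fin_cases i <;> simp <;> continuity) S
            (by
              intro t ht
              refine ⟨(0, t⁻¹), ⟨le_refl _, inv_nonneg.mpr (mem_Ioi.mp ht).le, by simp⟩, ?_⟩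
              rw [embR2, Projectivization.mk_eq_mk_iff']
              refine ⟨t⁻¹, ?_⟩
              funext i; fin_cases i <;>
                simp [inv_mul_cancel₀ (ne_of_gt (mem_Ioi.mp ht))])
          exact this
        · exact Bv_rep0
  refine ⟨hmain, ?_⟩
  rintro ⟨-, hpre⟩
  rw [hmain] at hpre
  have hJA : Jf Av = 1 := by rw [Jf, liftFrac_mk]; norm_num; rfl
  have hJB : Jf Bv = 0 := by rw [Jf, liftFrac_mk]; norm_num
  obtain ⟨x, -, hxu, hxv⟩ := hpre (Jf ⁻¹' (Ioi (1/2))) (Jf ⁻¹' (Iio (1/2)))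
    (isOpen_Ioi.preimage Jf_cont) (isOpen_Iio.preimage Jf_cont)
    (by
      rintro x (rfl | rfl)
      · left; show Jf Av ∈ Ioi (1/2:ℝ); rw [hJA]; norm_num
      · right; show Jf Bv ∈ Iio (1/2:ℝ); rw [hJB]; norm_num)
    ⟨Av, by simp, by show Jf Av ∈ Ioi (1/2:ℝ); rw [hJA]; norm_num⟩
    ⟨Bv, by simp, by show Jf Bv ∈ Iio (1/2:ℝ); rw [hJB]; norm_num⟩
  have h1 : (1/2:ℝ) < Jf x := hxu
  have h2 : Jf x < 1/2 := hxv
  linarith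
end
end

section
/- For every (x,y) ∈ ℝ², the image of the map f(x,y) = ((1+x⁴)y⁶/(1+y⁴)², (1+y⁴)x⁴/(1+x⁴)³) satisfies a²·b ≤ 1, a ≥ 0, b ≥ 0 where (a,b) := f(x,y). Consequently the set of points at infinity of f(ℝ²) is contained in {(0:1:0), (0:0:1)}. -/
open Projectivization Filter Topology Set

noncomputable section

/-- The regular map of Example 4.1(iii). -/
def fEx (p : ℝ × ℝ) : ℝ × ℝ :=
  ((1 + p.1 ^ 4) * p.2 ^ 6 / (1 + p.2 ^ 4) ^ 2,
   (1 + p.2 ^ 4) * p.1 ^ 4 / (1 + p.1 ^ 4) ^ 3)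

/-! ### Auxiliary machinery -/

/-- squared Euclidean norm on `Fin 3 → ℝ`. -/
def Nrm (v : Fin 3 → ℝ) : ℝ := v 0 ^ 2 + v 1 ^ 2 + v 2 ^ 2

lemma Nrm_pos {v : Fin 3 → ℝ} (hv : v ≠ 0) : 0 < Nrm v := by
  rcases lt_or_eq_of_le (show (0:ℝ) ≤ Nrm v by unfold Nrm; positivity) with h | h
  · exact h
  · exfalso; apply hv
    have hh : v 0 ^ 2 + v 1 ^ 2 + v 2 ^ 2 = 0 := h.symm
    have h0 : v 0 = 0 := by nlinarith [sq_nonneg (v 0), sq_nonneg (v 1), sq_nonneg (v 2)]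
    have h1 : v 1 = 0 := by nlinarith [sq_nonneg (v 0), sq_nonneg (v 1), sq_nonneg (v 2)]
    have h2 : v 2 = 0 := by nlinarith [sq_nonneg (v 0), sq_nonneg (v 1), sq_nonneg (v 2)]
    funext i; fin_cases i <;> simpa using (by assumption : _)

/-- A scale-invariant function on nonzero vectors of `ℝ³`. -/
def Gfun (v : { v : Fin 3 → ℝ // v ≠ 0 }) : ℝ × ℝ × ℝ :=
  ((v.1 0 * v.1 1) / Nrm v.1, (v.1 0 * v.1 2) / Nrm v.1,
   ((v.1 1) ^ 2 * (v.1 2) ^ 2 - v.1 2 * (v.1 0) ^ 3) / (Nrm v.1) ^ 2)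

lemma Gfun_inv : ∀ (a b : { v : Fin 3 → ℝ // v ≠ 0 }) (t : ℝ),
    (a : Fin 3 → ℝ) = t • (b : Fin 3 → ℝ) → Gfun a = Gfun b := by
  rintro ⟨a, ha⟩ ⟨b, hb⟩ t rfl
  have ht : t ≠ 0 := by rintro rfl; simp at ha
  have hb' : Nrm b ≠ 0 := (Nrm_pos hb).ne'
  have hN : Nrm (t • b) = t ^ 2 * Nrm b := by
    unfold Nrm; simp [Pi.smul_apply, smul_eq_mul]; ring
  unfold Gfun
  simp only [Pi.smul_apply, smul_eq_mul, hN]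
  refine Prod.ext ?_ (Prod.ext ?_ ?_) <;> field_simp <;> ring

/-- The induced continuous map on `ℝP²`. -/
def Ffun : Projectivization ℝ (Fin 3 → ℝ) → ℝ × ℝ × ℝ := Projectivization.lift Gfun Gfun_inv

lemma contF : Continuous Ffun := by
  apply continuous_quot_lift
  have hc : Continuous (fun v : { v : Fin 3 → ℝ // v ≠ 0 } => (v : Fin 3 → ℝ)) :=
    continuous_subtype_val
  have h0 : ∀ i, Continuous (fun v : { v : Fin 3 → ℝ // v ≠ 0 } => v.1 i) :=
    fun i => (continuous_apply i).comp hc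
  have hN : Continuous (fun v : { v : Fin 3 → ℝ // v ≠ 0 } => Nrm v.1) :=
    (((h0 0).pow 2).add ((h0 1).pow 2)).add ((h0 2).pow 2)
  have hN' : ∀ v : { v : Fin 3 → ℝ // v ≠ 0 }, Nrm v.1 ≠ 0 := fun v => (Nrm_pos v.2).ne'
  unfold Gfun
  refine Continuous.prodMk ?_ (Continuous.prodMk ?_ ?_)
  · exact ((h0 0).mul (h0 1)).div hN hN'
  · exact ((h0 0).mul (h0 2)).div hN hN'
  · exact ((((h0 1).pow 2).mul ((h0 2).pow 2)).sub ((h0 2).mul ((h0 0).pow 3))).div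
      (hN.pow 2) (fun v => pow_ne_zero 2 (hN' v))

lemma Ffun_mk (v : Fin 3 → ℝ) (hv : v ≠ 0) : Ffun (Projectivization.mk ℝ v hv) = Gfun ⟨v, hv⟩ :=
  rfl

/-- The closed constraint set. -/
def Kset : Set (ℝ × ℝ × ℝ) := {x | 0 ≤ x.1 ∧ 0 ≤ x.2.1 ∧ x.2.2 ≤ 0}

lemma Kset_closed : IsClosed Kset := by
  have : Kset = (Prod.fst ⁻¹' Ici 0) ∩ ((Prod.fst ∘ Prod.snd) ⁻¹' Ici 0)
      ∩ ((Prod.snd ∘ Prod.snd) ⁻¹' Iic 0) := by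
    ext x; simp [Kset, and_assoc]
  rw [this]
  exact ((isClosed_Ici.preimage continuous_fst).inter
    (isClosed_Ici.preimage (continuous_fst.comp continuous_snd))).inter
    (isClosed_Iic.preimage (continuous_snd.comp continuous_snd))

lemma fEx_bounds (p : ℝ × ℝ) :
    0 ≤ (fEx p).1 ∧ 0 ≤ (fEx p).2 ∧ (fEx p).1 ^ 2 * (fEx p).2 ≤ 1 := by
  obtain ⟨x, y⟩ := p
  have h1 : (0:ℝ) < 1 + x ^ 4 := by positivity
  have h2 : (0:ℝ) < 1 + y ^ 4 := by positivity
  refine ⟨by unfold fEx; positivity, by unfold fEx; positivity, ?_⟩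
  show ((1 + x ^ 4) * y ^ 6 / (1 + y ^ 4) ^ 2) ^ 2 * ((1 + y ^ 4) * x ^ 4 / (1 + x ^ 4) ^ 3) ≤ 1
  rw [div_pow, div_mul_div_comm, div_le_one (by positivity)]
  have h3 : y ^ 12 ≤ (1 + y ^ 4) ^ 3 := by nlinarith [sq_nonneg (y ^ 4), pow_nonneg (sq_nonneg y) 2]
  have h4 : x ^ 4 ≤ 1 + x ^ 4 := by linarith
  have h5 : y ^ 12 * x ^ 4 ≤ (1 + y ^ 4) ^ 3 * (1 + x ^ 4) :=
    mul_le_mul h3 h4 (by positivity) (by positivity)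
  have h6 : (1 + x ^ 4) ^ 2 * (1 + y ^ 4) * (y ^ 12 * x ^ 4)
      ≤ (1 + x ^ 4) ^ 2 * (1 + y ^ 4) * ((1 + y ^ 4) ^ 3 * (1 + x ^ 4)) :=
    mul_le_mul_of_nonneg_left h5 (by positivity)
  nlinarith [h6]

theorem stmt11 :
    (∀ p : ℝ × ℝ, 0 ≤ (fEx p).1 ∧ 0 ≤ (fEx p).2 ∧ (fEx p).1 ^ 2 * (fEx p).2 ≤ 1) ∧
    ptsAtInf (Set.range fEx) ⊆
      {Projectivization.mk ℝ ![0, 1, 0] (by intro h; have := congrFun h 1; simp at this),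
       Projectivization.mk ℝ ![0, 0, 1] (by intro h; have := congrFun h 2; simp at this)} := by
  refine ⟨fEx_bounds, ?_⟩
  -- the image lands in the closed set `Ffun ⁻¹' Kset`
  have himg : embR2 '' Set.range fEx ⊆ Ffun ⁻¹' Kset := by
    rintro _ ⟨_, ⟨p, rfl⟩, rfl⟩
    obtain ⟨ha, hb, hab⟩ := fEx_bounds p
    set a := (fEx p).1
    set b := (fEx p).2
    show Ffun (Projectivization.mk ℝ ![1, a, b] _) ∈ Kset
    rw [Ffun_mk]
    have hv0 : (![1, a, b] : Fin 3 → ℝ) 0 = 1 := rfl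
    have hv1 : (![1, a, b] : Fin 3 → ℝ) 1 = a := rfl
    have hv2 : (![1, a, b] : Fin 3 → ℝ) 2 = b := rfl
    have hNp : 0 < Nrm ![1, a, b] :=
      Nrm_pos (by intro h; have := congrFun h 0; simp at this)
    refine ⟨?_, ?_, ?_⟩ <;> simp only [Gfun, hv0, hv1, hv2, one_mul]
    · exact div_nonneg ha hNp.le
    · exact div_nonneg hb hNp.le
    · apply div_nonpos_of_nonpos_of_nonneg _ (by positivity)
      nlinarith [hab, hb]
  have hcl : closure (embR2 '' Set.range fEx) ⊆ Ffun ⁻¹' Kset :=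
    closure_minimal himg (Kset_closed.preimage contF)
  rintro q ⟨hq1, hq2⟩
  have hv : q.rep ≠ 0 := q.rep_nonzero
  have hmk : Projectivization.mk ℝ q.rep hv = q := Projectivization.mk_rep q
  have hFq : Ffun q ∈ Kset := hcl hq1
  rw [← hmk, Ffun_mk] at hFq
  obtain ⟨-, -, h3⟩ := hFq
  have h0 : q.rep 0 = 0 := hq2
  have hNp : 0 < Nrm q.rep := Nrm_pos hv
  have h3' : ((q.rep 1) ^ 2 * (q.rep 2) ^ 2 - q.rep 2 * (q.rep 0) ^ 3) / (Nrm q.rep) ^ 2 ≤ 0 :=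
    h3
  have hnum : (q.rep 1) ^ 2 * (q.rep 2) ^ 2 - q.rep 2 * (q.rep 0) ^ 3 ≤ 0 := by
    rcases div_nonpos_iff.mp h3' with ⟨-, hden⟩ | ⟨h, -⟩
    · nlinarith [hNp]
    · exact h
  rw [h0] at hnum
  have hsq : (q.rep 1 * q.rep 2) ^ 2 ≤ 0 := by nlinarith [hnum]
  have hmul : q.rep 1 * q.rep 2 = 0 := by
    have := sq_nonneg (q.rep 1 * q.rep 2)
    nlinarith
  simp only [Set.mem_insert_iff, Set.mem_singleton_iff]
  rcases mul_eq_zero.mp hmul with h1 | h2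
  · -- q.rep 1 = 0 : the point is (0:0:1)
    right
    rw [← hmk, Projectivization.mk_eq_mk_iff']
    refine ⟨q.rep 2, ?_⟩
    funext i; fin_cases i <;>
      simp [h0, h1, Matrix.cons_val_zero, Matrix.cons_val_one, Matrix.head_cons]
  · -- q.rep 2 = 0 : the point is (0:1:0)
    left
    rw [← hmk, Projectivization.mk_eq_mk_iff']
    refine ⟨q.rep 1, ?_⟩
    funext i; fin_cases i <;>
      simp [h0, h2, Matrix.cons_val_zero, Matrix.cons_val_one, Matrix.head_cons]
end
end

section
/- Let H_i(x,y) = c_i x − d_i y for i = 1,…,r with c_i d_i ≠ 0 and the lines {H_i = 0} pairwise distinct. Define h : ℝ² → ℝ² by h(x,y) = (x²/(1 + ∏ᵢ H_i(x,y)²), y²/(1 + ∏ᵢ H_i(x,y)²)). Then each point p_i := (0 : d_i² : c_i²) ∈ ℝP² lies in the set of points at infinity of h(ℝ²); indeed h(d_i/t, c_i/t) = (d_i²/t², c_i²/t²) for all t ≠ 0, and this tends to p_i in ℝP² as t → 0⁺. -/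
open Projectivization Filter Topology Set

noncomputable section

lemma contMk : Continuous (fun v : {v : Fin 3 → ℝ // v ≠ 0} => Projectivization.mk' ℝ v) :=
  continuous_quotient_mk'

theorem stmt13 (r : ℕ) (c d : Fin r → ℝ) (hcd : ∀ i, c i * d i ≠ 0)
    (hdist : ∀ i j, i ≠ j → c i * d j ≠ c j * d i)
    (h : ℝ × ℝ → ℝ × ℝ)
    (hh : ∀ p : ℝ × ℝ,
      h p = (p.1 ^ 2 / (1 + ∏ i, (c i * p.1 - d i * p.2) ^ 2),
             p.2 ^ 2 / (1 + ∏ i, (c i * p.1 - d i * p.2) ^ 2))) (i : Fin r) :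
    (∀ t : ℝ, t ≠ 0 → h (d i / t, c i / t) = ((d i) ^ 2 / t ^ 2, (c i) ^ 2 / t ^ 2)) ∧
    Tendsto (fun t : ℝ => embR2 (h (d i / t, c i / t))) (𝓝[>] 0)
      (𝓝 (Projectivization.mk ℝ ![0, (d i) ^ 2, (c i) ^ 2] (by
        intro hv
        have h1 := congrFun hv 1
        simp at h1
        exact (fun hd0 => hcd i (by rw [hd0, mul_zero])) h1))) ∧
    Projectivization.mk ℝ ![0, (d i) ^ 2, (c i) ^ 2] (by
        intro hv
        have h1 := congrFun hv 1
        simp at h1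
        exact (fun hd0 => hcd i (by rw [hd0, mul_zero])) h1) ∈
      ptsAtInf (Set.range h) := by
  have hd0 : d i ≠ 0 := fun h0 => hcd i (by rw [h0, mul_zero])
  have hd2 : (d i) ^ 2 ≠ 0 := pow_ne_zero 2 hd0
  -- Part 1
  have part1 : ∀ t : ℝ, t ≠ 0 →
      h (d i / t, c i / t) = ((d i) ^ 2 / t ^ 2, (c i) ^ 2 / t ^ 2) := by
    intro t ht
    have hprod : (∏ j, (c j * (d i / t) - d j * (c i / t)) ^ 2) = 0 := by
      apply Finset.prod_eq_zero (Finset.mem_univ i)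
      have : c i * (d i / t) - d i * (c i / t) = 0 := by ring
      rw [this]; ring
    rw [hh]
    simp only [hprod, add_zero, div_one, div_pow]
  -- nonzero proofs for vectors
  have hne : ∀ t : ℝ, (![t ^ 2, (d i) ^ 2, (c i) ^ 2] : Fin 3 → ℝ) ≠ 0 := by
    intro t h0
    have := congrFun h0 1
    simp at this
    exact hd0 this
  have hne0 : (![0, (d i) ^ 2, (c i) ^ 2] : Fin 3 → ℝ) ≠ 0 := hne 0 ∘ (by
    intro h0; rw [← h0]; norm_num)
  -- key rewriting
  have key : ∀ t : ℝ, 0 < t →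
      embR2 (h (d i / t, c i / t)) =
        Projectivization.mk ℝ ![t ^ 2, (d i) ^ 2, (c i) ^ 2] (hne t) := by
    intro t ht
    rw [part1 t ht.ne']
    unfold embR2
    rw [Projectivization.mk_eq_mk_iff]
    refine ⟨Units.mk0 ((t ^ 2)⁻¹) (by positivity), ?_⟩
    funext j
    fin_cases j <;> simp [Units.smul_def] <;> field_simp
  -- tendsto of vectors
  have hvec : Tendsto (fun t : ℝ => (![t ^ 2, (d i) ^ 2, (c i) ^ 2] : Fin 3 → ℝ))
      (𝓝[>] 0) (𝓝 ![0, (d i) ^ 2, (c i) ^ 2]) := by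
    have hc : Continuous (fun t : ℝ => (![t ^ 2, (d i) ^ 2, (c i) ^ 2] : Fin 3 → ℝ)) := by
      refine continuous_pi fun j => ?_
      fin_cases j <;> simp <;> fun_prop
    have := hc.tendsto 0
    simp only [ne_eq, zero_pow, OfNat.ofNat_ne_zero, not_false_eq_true] at this
    exact this.mono_left nhdsWithin_le_nhds
  -- tendsto in projectivization
  have part2 : Tendsto (fun t : ℝ => embR2 (h (d i / t, c i / t))) (𝓝[>] 0)
      (𝓝 (Projectivization.mk ℝ ![0, (d i) ^ 2, (c i) ^ 2] hne0)) := by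
    have hsub : Tendsto (fun t : ℝ => (⟨![t ^ 2, (d i) ^ 2, (c i) ^ 2], hne t⟩ :
        {v : Fin 3 → ℝ // v ≠ 0})) (𝓝[>] 0) (𝓝 ⟨![0, (d i) ^ 2, (c i) ^ 2], hne0⟩) :=
      tendsto_subtype_rng.2 hvec
    have := (contMk.tendsto _).comp hsub
    refine this.congr' ?_
    filter_upwards [self_mem_nhdsWithin] with t ht
    exact (key t ht).symm
  refine ⟨part1, part2, ?_, ?_⟩
  · -- closure
    apply mem_closure_of_tendsto part2
    filter_upwards [self_mem_nhdsWithin] with t _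
    exact ⟨h (d i / t, c i / t), ⟨(d i / t, c i / t), rfl⟩, rfl⟩
  · -- line at infinity
    set q := Projectivization.mk ℝ ![0, (d i) ^ 2, (c i) ^ 2] hne0 with hq
    have hrep : Projectivization.mk ℝ q.rep q.rep_nonzero = q := Projectivization.mk_rep q
    rw [hq, Projectivization.mk_eq_mk_iff] at hrep
    obtain ⟨a, ha⟩ := hrep
    show q.rep 0 = 0
    rw [← ha]
    simp [Units.smul_def]
end
end

section
/- Let h : ℝ² → ℝ² be given by h(x,y) = ( x((y−1)²y² + 2(x−1)²x) / (1 + x(x−1)²y(y−1)²), y((x−1)²x² + 2(y−1)²y) / (1 + x(x−1)²y(y−1)²) ). Then for all (x,y) with 0 < x ≤ 1 and y ≥ 4, writing (a,b) := h(x,y), one has a > 0 and b ≥ 2a; in particular h maps A₁ := {0 < x ≤ 1, 4 ≤ y} into B₁ := {0 < 2a ≤ b}. -/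
theorem stmt17 :
    let h : ℝ × ℝ → ℝ × ℝ := fun p =>
      (p.1 * ((p.2 - 1) ^ 2 * p.2 ^ 2 + 2 * (p.1 - 1) ^ 2 * p.1) /
         (1 + p.1 * (p.1 - 1) ^ 2 * p.2 * (p.2 - 1) ^ 2),
       p.2 * ((p.1 - 1) ^ 2 * p.1 ^ 2 + 2 * (p.2 - 1) ^ 2 * p.2) /
         (1 + p.1 * (p.1 - 1) ^ 2 * p.2 * (p.2 - 1) ^ 2))
    ∀ x y : ℝ, 0 < x → x ≤ 1 → 4 ≤ y →
      0 < (h (x, y)).1 ∧ 2 * (h (x, y)).1 ≤ (h (x, y)).2 := by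
  intro h x y hx hx1 hy
  simp only [h]
  have hD : (0:ℝ) < 1 + x * (x - 1) ^ 2 * y * (y - 1) ^ 2 := by positivity
  constructor
  · apply div_pos _ hD
    have hy0 : (0:ℝ) < y := by linarith
    have : (0:ℝ) < (y - 1) ^ 2 * y ^ 2 := by nlinarith
    nlinarith [sq_nonneg (x - 1), sq_nonneg x]
  · rw [← mul_div_assoc, div_le_div_iff₀ hD hD]
    nlinarith [sq_nonneg (x-1), sq_nonneg (y-1), mul_pos hx (by linarith : (0:ℝ) < y),
      mul_nonneg (mul_nonneg (sq_nonneg (x-1)) hx.le) (sq_nonneg x),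
      mul_nonneg (mul_nonneg (sq_nonneg (y-1)) (by linarith : (0:ℝ) ≤ y)) (sq_nonneg y),
      mul_nonneg (mul_nonneg (mul_nonneg (by linarith : (0:ℝ) ≤ 1 - x) (sq_nonneg (y-1))) (sq_nonneg y)) hD.le,
      mul_nonneg (mul_nonneg (mul_nonneg (by linarith : (0:ℝ) ≤ y - 4) (sq_nonneg (x-1))) (sq_nonneg x)) hD.le]
end

section
/- With h as in the previous statement, for every λ with 0 < λ ≤ 1, the curve t ↦ h(λ, t) for t ≥ 4 satisfies: both coordinates tend to +∞ as t → +∞, and their ratio (first coordinate over second) tends to λ/2. Consequently the point (0 : λ/2 : 1) ∈ ℝP² lies in the set of points at infinity of h({0 < x ≤ 1, 4 ≤ y}); hence {(0:u:1) : 0 ≤ u ≤ 1/2} is contained in (h(A₁))_∞. -/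
open Projectivization Filter Topology Set

noncomputable section

/-- The regular map `h` of Lemma 4.3. -/
def hMap (p : ℝ × ℝ) : ℝ × ℝ :=
  (p.1 * ((p.2 - 1) ^ 2 * p.2 ^ 2 + 2 * (p.1 - 1) ^ 2 * p.1) /
     (1 + p.1 * (p.1 - 1) ^ 2 * p.2 * (p.2 - 1) ^ 2),
   p.2 * ((p.1 - 1) ^ 2 * p.1 ^ 2 + 2 * (p.2 - 1) ^ 2 * p.2) /
     (1 + p.1 * (p.1 - 1) ^ 2 * p.2 * (p.2 - 1) ^ 2))

/-- The strip `A₁ = {0 < x ≤ 1, 4 ≤ y}`. -/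
def A1 : Set (ℝ × ℝ) := {p | 0 < p.1 ∧ p.1 ≤ 1 ∧ 4 ≤ p.2}

/-! ### Auxiliary projectivization lemmas -/

lemma aux_mk_tendsto {α : Type*} {f : Filter α} {v : α → Fin 3 → ℝ} {w : Fin 3 → ℝ}
    (hv : ∀ a, v a ≠ 0) (hw : w ≠ 0) (h : Tendsto v f (𝓝 w)) :
    Tendsto (fun a => Projectivization.mk ℝ (v a) (hv a)) f
      (𝓝 (Projectivization.mk ℝ w hw)) := by
  have h1 : Tendsto (fun a => (⟨v a, hv a⟩ : {u : Fin 3 → ℝ // u ≠ 0})) f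
      (𝓝 (⟨w, hw⟩ : {u : Fin 3 → ℝ // u ≠ 0})) := tendsto_subtype_rng.mpr h
  exact ((@continuous_quotient_mk' _ _ (projectivizationSetoid ℝ (Fin 3 → ℝ))).tendsto _).comp h1

lemma aux_rep_zero_eq (v : Fin 3 → ℝ) (hv : v ≠ 0) :
    ∃ a : ℝˣ, (Projectivization.mk ℝ v hv).rep 0 = (a : ℝ) * v 0 := by
  have h := Projectivization.mk_rep (Projectivization.mk ℝ v hv)
  rw [Projectivization.mk_eq_mk_iff] at h
  obtain ⟨a, ha⟩ := h
  exact ⟨a, by rw [← ha]; simp [Units.smul_def]⟩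

lemma aux_mem_lineAtInf (v : Fin 3 → ℝ) (hv : v ≠ 0) (h0 : v 0 = 0) :
    Projectivization.mk ℝ v hv ∈ lineAtInf := by
  obtain ⟨a, ha⟩ := aux_rep_zero_eq v hv
  simp [lineAtInf, ha, h0]

lemma aux_isClosed_lineAtInf : IsClosed lineAtInf := by
  have hq : IsQuotientMap (@Quotient.mk' _ (projectivizationSetoid ℝ (Fin 3 → ℝ))) :=
    isQuotientMap_quotient_mk'
  refine (hq.isClosed_preimage (s := lineAtInf)).mp ?_
  have heq : (@Quotient.mk' _ (projectivizationSetoid ℝ (Fin 3 → ℝ))) ⁻¹'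
      lineAtInf = {p : {u : Fin 3 → ℝ // u ≠ 0} | p.1 0 = 0} := by
    ext ⟨u, hu⟩
    have hmk : (@Quotient.mk' _ (projectivizationSetoid ℝ (Fin 3 → ℝ)) ⟨u, hu⟩) =
        Projectivization.mk ℝ u hu := rfl
    simp only [mem_preimage, hmk, mem_setOf_eq]
    constructor
    · intro h
      obtain ⟨a, ha⟩ := aux_rep_zero_eq u hu
      have h' : (Projectivization.mk ℝ u hu).rep 0 = 0 := h
      rw [ha] at h'
      exact (mul_eq_zero.mp h').resolve_left a.ne_zero
    · exact aux_mem_lineAtInf u hu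
  rw [heq]
  exact isClosed_eq ((continuous_apply 0).comp continuous_subtype_val) continuous_const

lemma aux_mk_scale (x y : ℝ) (hy : y ≠ 0) (h1 : (![1, x, y] : Fin 3 → ℝ) ≠ 0)
    (h2 : (![1/y, x/y, 1] : Fin 3 → ℝ) ≠ 0) :
    Projectivization.mk ℝ ![1, x, y] h1 = Projectivization.mk ℝ ![1/y, x/y, 1] h2 := by
  rw [Projectivization.mk_eq_mk_iff]
  refine ⟨Units.mk0 y hy, ?_⟩
  funext i
  fin_cases i <;> simp [Units.smul_def] <;> field_simp

lemma aux_mk_congr {v w : Fin 3 → ℝ} (hv : v ≠ 0) (hw : w ≠ 0) (h : v = w) :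
    Projectivization.mk ℝ v hv = Projectivization.mk ℝ w hw := by subst h; rfl

lemma aux_vec_ne (a b : ℝ) : (![a, b, 1] : Fin 3 → ℝ) ≠ 0 := by
  intro h; have := congrFun h 2; simp at this

/-! ### Asymptotic lemmas -/

lemma aux_c_le_one {l : ℝ} (hl0 : 0 < l) (hl1 : l ≤ 1) : l * (l - 1) ^ 2 ≤ 1 := by
  nlinarith [sq_nonneg (1 - l)]

lemma aux_D_pos {l : ℝ} (hl0 : 0 < l) (t : ℝ) (ht : 4 ≤ t) :
    0 < 1 + l * (l - 1) ^ 2 * t * (t - 1) ^ 2 := by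
  have ht0 : (0:ℝ) ≤ t := by linarith
  have hl0' : (0:ℝ) ≤ l := hl0.le
  positivity

lemma aux_lb1 {l : ℝ} (hl0 : 0 < l) (hl1 : l ≤ 1) (t : ℝ) (ht : 4 ≤ t) :
    l / 2 * t ≤ (hMap (l, t)).1 := by
  have hD := aux_D_pos hl0 t ht
  have k1 : (1:ℝ) ≤ t * (t - 1) ^ 2 := by nlinarith
  have k2 := aux_c_le_one hl0 hl1
  simp only [hMap]
  rw [le_div_iff₀ hD]
  have ht0 : (0:ℝ) ≤ t := by linarith
  have hA : 0 ≤ l * t * (t * (t - 1) ^ 2 - 1) :=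
    mul_nonneg (mul_nonneg hl0.le ht0) (by linarith)
  have hB : 0 ≤ l * t * (t * (t - 1) ^ 2) * (1 - l * (l - 1) ^ 2) :=
    mul_nonneg (mul_nonneg (mul_nonneg hl0.le ht0)
      (mul_nonneg ht0 (sq_nonneg _))) (by linarith)
  have hC : 0 ≤ 2 * (l - 1) ^ 2 * l * l :=
    mul_nonneg (mul_nonneg (by positivity) hl0.le) hl0.le
  nlinarith [hA, hB, hC]

lemma aux_lb2 {l : ℝ} (hl0 : 0 < l) (hl1 : l ≤ 1) (t : ℝ) (ht : 4 ≤ t) :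
    t ≤ (hMap (l, t)).2 := by
  have hD := aux_D_pos hl0 t ht
  have k1 : (1:ℝ) ≤ t * (t - 1) ^ 2 := by nlinarith
  have k2 := aux_c_le_one hl0 hl1
  simp only [hMap]
  rw [le_div_iff₀ hD]
  have ht0 : (0:ℝ) ≤ t := by linarith
  have hA : 0 ≤ t * (t * (t - 1) ^ 2 - 1) := mul_nonneg ht0 (by linarith)
  have hB : 0 ≤ t * (t * (t - 1) ^ 2) * (1 - l * (l - 1) ^ 2) :=
    mul_nonneg (mul_nonneg ht0 (mul_nonneg ht0 (sq_nonneg _))) (by linarith)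
  have hC : 0 ≤ (l - 1) ^ 2 * l ^ 2 * t := by positivity
  nlinarith [hA, hB, hC]

lemma aux_T1 {l : ℝ} (hl0 : 0 < l) (hl1 : l ≤ 1) :
    Tendsto (fun t : ℝ => (hMap (l, t)).1) atTop atTop := by
  refine tendsto_atTop_mono' atTop ?_ (tendsto_id.const_mul_atTop (by positivity : (0:ℝ) < l / 2))
  filter_upwards [eventually_ge_atTop (4:ℝ)] with t ht using aux_lb1 hl0 hl1 t ht

lemma aux_T2 {l : ℝ} (hl0 : 0 < l) (hl1 : l ≤ 1) :
    Tendsto (fun t : ℝ => (hMap (l, t)).2) atTop atTop := by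
  refine tendsto_atTop_mono' atTop ?_ tendsto_id
  filter_upwards [eventually_ge_atTop (4:ℝ)] with t ht using aux_lb2 hl0 hl1 t ht

lemma aux_ratio_eq {l : ℝ} (hl0 : 0 < l) (t : ℝ) (ht : 4 ≤ t) :
    (hMap (l, t)).1 / (hMap (l, t)).2 =
      (l * ((1 - t⁻¹) ^ 2 + 2 * (l - 1) ^ 2 * l * (t⁻¹) ^ 4)) /
        ((l - 1) ^ 2 * l ^ 2 * (t⁻¹) ^ 3 + 2 * (1 - t⁻¹) ^ 2) := by
  have ht0 : (0:ℝ) < t := by linarith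
  have hD := aux_D_pos hl0 t ht
  have hN2 : 0 < t * ((l - 1) ^ 2 * l ^ 2 + 2 * (t - 1) ^ 2 * t) := by
    nlinarith [sq_nonneg ((l-1)*l)]
  have h1 : (0:ℝ) < 1 - t⁻¹ := by
    rw [sub_pos, inv_lt_one_iff₀]; right; linarith
  have hden : 0 < (l - 1) ^ 2 * l ^ 2 * (t⁻¹) ^ 3 + 2 * (1 - t⁻¹) ^ 2 := by positivity
  simp only [hMap]
  rw [div_div_div_cancel_right₀ hD.ne']
  rw [div_eq_div_iff hN2.ne' hden.ne']
  field_simp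

lemma aux_T3 {l : ℝ} (hl0 : 0 < l) (hl1 : l ≤ 1) :
    Tendsto (fun t : ℝ => (hMap (l, t)).1 / (hMap (l, t)).2) atTop (𝓝 (l / 2)) := by
  have hnum : Tendsto (fun t : ℝ => l * ((1 - t⁻¹) ^ 2 + 2 * (l - 1) ^ 2 * l * (t⁻¹) ^ 4))
      atTop (𝓝 l) := by
    have hcont : Continuous (fun s : ℝ => l * ((1 - s) ^ 2 + 2 * (l - 1) ^ 2 * l * s ^ 4)) := by
      fun_prop
    have h := (hcont.tendsto 0).comp tendsto_inv_atTop_zero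
    have h0 : l * ((1 - (0:ℝ)) ^ 2 + 2 * (l - 1) ^ 2 * l * (0:ℝ) ^ 4) = l := by norm_num
    rw [h0] at h
    exact h
  have hden : Tendsto (fun t : ℝ => (l - 1) ^ 2 * l ^ 2 * (t⁻¹) ^ 3 + 2 * (1 - t⁻¹) ^ 2)
      atTop (𝓝 2) := by
    have hcont : Continuous (fun s : ℝ => (l - 1) ^ 2 * l ^ 2 * s ^ 3 + 2 * (1 - s) ^ 2) := by
      fun_prop
    have h := (hcont.tendsto 0).comp tendsto_inv_atTop_zero
    have h0 : (l - 1) ^ 2 * l ^ 2 * (0:ℝ) ^ 3 + 2 * (1 - (0:ℝ)) ^ 2 = 2 := by norm_num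
    rw [h0] at h
    exact h
  have := hnum.div hden (by norm_num)
  refine Tendsto.congr' ?_ this
  filter_upwards [eventually_ge_atTop (4:ℝ)] with t ht
  exact (aux_ratio_eq hl0 t ht).symm

/-! ### The point at infinity -/

lemma aux_mem_ptsAtInf {l : ℝ} (hl0 : 0 < l) (hl1 : l ≤ 1)
    (hw : (![0, l / 2, 1] : Fin 3 → ℝ) ≠ 0) :
    Projectivization.mk ℝ ![0, l / 2, 1] hw ∈ ptsAtInf (hMap '' A1) := by
  set v : ℝ → Fin 3 → ℝ := fun t => ![1 / (hMap (l, t)).2, (hMap (l, t)).1 / (hMap (l, t)).2, 1]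
    with hv_def
  have hv : ∀ t, v t ≠ 0 := fun t => aux_vec_ne _ _
  have hT2 := aux_T2 hl0 hl1
  have hvec : Tendsto v atTop (𝓝 ![0, l / 2, 1]) := by
    rw [tendsto_pi_nhds]
    intro i
    fin_cases i
    · simp only [hv_def, Matrix.cons_val_zero]
      have : Tendsto (fun t : ℝ => ((hMap (l, t)).2)⁻¹) atTop (𝓝 0) :=
        tendsto_inv_atTop_zero.comp hT2
      simpa [one_div] using this
    · exact aux_T3 hl0 hl1
    · simp only [hv_def]
      exact tendsto_const_nhds
  have hTmk : Tendsto (fun t => Projectivization.mk ℝ (v t) (hv t)) atTop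
      (𝓝 (Projectivization.mk ℝ ![0, l / 2, 1] hw)) := aux_mk_tendsto hv hw hvec
  have hEq : ∀ᶠ t in atTop, Projectivization.mk ℝ (v t) (hv t) = embR2 (hMap (l, t)) := by
    filter_upwards [eventually_ge_atTop (4:ℝ)] with t ht
    have hy : (hMap (l, t)).2 ≠ 0 := by
      have h2 := aux_lb2 hl0 hl1 t ht
      exact ne_of_gt (lt_of_lt_of_le (by linarith : (0:ℝ) < t) h2)
    exact (aux_mk_scale (hMap (l, t)).1 (hMap (l, t)).2 hy _ _).symm
  have hT4 : Tendsto (fun t => embR2 (hMap (l, t))) atTop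
      (𝓝 (Projectivization.mk ℝ ![0, l / 2, 1] hw)) := Tendsto.congr' hEq hTmk
  constructor
  · refine mem_closure_of_tendsto hT4 ?_
    filter_upwards [eventually_ge_atTop (4:ℝ)] with t ht
    exact ⟨hMap (l, t), ⟨(l, t), ⟨hl0, hl1, ht⟩, rfl⟩, rfl⟩
  · exact aux_mem_lineAtInf _ hw (by simp)

lemma aux_mem_ptsAtInf' {u : ℝ} (hu0 : 0 < u) (hu1 : u ≤ 1 / 2)
    (hw : (![0, u, 1] : Fin 3 → ℝ) ≠ 0) :
    Projectivization.mk ℝ ![0, u, 1] hw ∈ ptsAtInf (hMap '' A1) := by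
  have h := aux_mem_ptsAtInf (l := 2 * u) (by linarith) (by linarith)
    (by intro hv; have := congrFun hv 2; simp at this)
  have heq : Projectivization.mk ℝ ![0, 2 * u / 2, 1]
      (by intro hv; have := congrFun hv 2; simp at this) =
      Projectivization.mk ℝ ![0, u, 1] hw := by
    apply aux_mk_congr
    funext i
    fin_cases i <;> simp <;> ring
  rwa [heq] at h

theorem stmt18 (l : ℝ) (hl0 : 0 < l) (hl1 : l ≤ 1) :
    Tendsto (fun t : ℝ => (hMap (l, t)).1) atTop atTop ∧
    Tendsto (fun t : ℝ => (hMap (l, t)).2) atTop atTop ∧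
    Tendsto (fun t : ℝ => (hMap (l, t)).1 / (hMap (l, t)).2) atTop (𝓝 (l / 2)) ∧
    Projectivization.mk ℝ ![0, l / 2, 1] (by intro hv; have := congrFun hv 2; simp at this) ∈
      ptsAtInf (hMap '' A1) ∧
    {q | ∃ u : ℝ, 0 ≤ u ∧ u ≤ 1 / 2 ∧
        q = Projectivization.mk ℝ ![0, u, 1]
          (by intro hv; have := congrFun hv 2; simp at this)} ⊆
      ptsAtInf (hMap '' A1) := by
  refine ⟨aux_T1 hl0 hl1, aux_T2 hl0 hl1, aux_T3 hl0 hl1, aux_mem_ptsAtInf hl0 hl1 _, ?_⟩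
  rintro q ⟨u, hu0, hu1, rfl⟩
  rcases eq_or_lt_of_le hu0 with h0 | h0
  · -- u = 0 : limit of points with u > 0
    subst h0
    have hcl : IsClosed (ptsAtInf (hMap '' A1)) :=
      isClosed_closure.inter aux_isClosed_lineAtInf
    have hv : ∀ u : ℝ, (![0, u, 1] : Fin 3 → ℝ) ≠ 0 := fun u => aux_vec_ne _ _
    have hvec : Tendsto (fun u : ℝ => (![0, u, 1] : Fin 3 → ℝ)) (𝓝[>] (0:ℝ))
        (𝓝 ![0, 0, 1]) := by
      rw [tendsto_pi_nhds]
      intro i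
      fin_cases i
      · exact tendsto_const_nhds
      · exact (tendsto_id.mono_left nhdsWithin_le_nhds :
          Tendsto (fun u : ℝ => u) (𝓝[>] (0:ℝ)) (𝓝 0))
      · exact tendsto_const_nhds
    have hTmk : Tendsto (fun u : ℝ => Projectivization.mk ℝ ![0, u, 1] (hv u)) (𝓝[>] (0:ℝ))
        (𝓝 (Projectivization.mk ℝ ![0, 0, 1] (hv 0))) := aux_mk_tendsto hv (hv 0) hvec
    refine hcl.mem_of_tendsto hTmk ?_
    filter_upwards [Ioc_mem_nhdsGT_of_mem (left_mem_Ico.mpr (by norm_num : (0:ℝ) < 1/2))]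
      with x hx
    exact aux_mem_ptsAtInf' hx.1 hx.2 (hv x)
  · exact aux_mem_ptsAtInf' h0 hu1 _

end
end

section
/- There exists a regular map f : ℝ² → ℝ² (namely f = h ∘ g with g(x,y) = ((x²+1)/(1+x²y²), (y²+1)/(1+x²y²)) and h as in Lemma 4.3) whose image S satisfies S_∞ = {(0:u:1) : 0 ≤ u ≤ 1/2} ∪ {(0:1:v) : 0 ≤ v ≤ 1/2}; in particular the set of points at infinity of a two-dimensional regular image of ℝ² can have exactly two one-dimensional connected components. -/
open Projectivization Filter Topology Set

noncomputable section

namespace Aux19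

abbrev P2 := Projectivization ℝ (Fin 3 → ℝ)

def rawF (v : { w : Fin 3 → ℝ // w ≠ 0 }) : Fin 3 → Fin 3 → ℝ :=
  fun i j => v.1 i * v.1 j / (∑ k, v.1 k ^ 2)

lemma sumsq_pos (v : Fin 3 → ℝ) (hv : v ≠ 0) : 0 < ∑ k, v k ^ 2 := by
  have : ∃ i, v i ≠ 0 := by
    by_contra h
    push_neg at h
    exact hv (funext h)
  obtain ⟨i, hi⟩ := this
  have : 0 < v i ^ 2 := by positivity
  have hle : v i ^ 2 ≤ ∑ k, v k ^ 2 :=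
    Finset.single_le_sum (f := fun k => v k ^ 2) (fun k _ => by positivity) (Finset.mem_univ i)
  linarith

lemma rawF_smul (a b : { w : Fin 3 → ℝ // w ≠ 0 }) (t : ℝ) (h : (a : Fin 3 → ℝ) = t • (b : Fin 3 → ℝ)) :
    rawF a = rawF b := by
  have ht : t ≠ 0 := by
    rintro rfl
    exact a.2 (by simpa using h)
  funext i j
  have hb := sumsq_pos b.1 b.2
  simp only [rawF, h, Pi.smul_apply, smul_eq_mul]
  rw [show (∑ k, (t * b.1 k) ^ 2) = t ^ 2 * ∑ k, b.1 k ^ 2 by rw [Finset.mul_sum]; ring_nf]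
  field_simp

def F : P2 → (Fin 3 → Fin 3 → ℝ) := Projectivization.lift rawF rawF_smul

lemma F_mk (v : Fin 3 → ℝ) (hv : v ≠ 0) : F (Projectivization.mk ℝ v hv) = rawF ⟨v, hv⟩ := rfl

lemma continuous_F : Continuous F := by
  apply Continuous.quotient_lift
  apply continuous_pi; intro i; apply continuous_pi; intro j
  apply Continuous.div
  · exact ((continuous_apply i).comp continuous_subtype_val).mul
      ((continuous_apply j).comp continuous_subtype_val)
  · exact continuous_finset_sum _ fun k _ =>
      (((continuous_apply k).comp continuous_subtype_val).pow 2)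
  · exact fun v => (sumsq_pos v.1 v.2).ne'

lemma injective_F : Function.Injective F := by
  intro p q h
  induction p using Projectivization.ind with | _ v hv =>
  induction q using Projectivization.ind with | _ w hw =>
  rw [F_mk, F_mk] at h
  have hvs := sumsq_pos v hv
  have hws := sumsq_pos w hw
  obtain ⟨i, hi⟩ : ∃ i, v i ≠ 0 := by
    by_contra hc; push_neg at hc; exact hv (funext hc)
  have hii := congrFun (congrFun h i) i
  simp only [rawF] at hii
  have hwi : w i ≠ 0 := by
    intro h0
    rw [h0] at hii
    have : v i * v i / (∑ k, v k ^ 2) > 0 := div_pos (mul_self_pos.mpr hi) hvs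
    rw [hii] at this
    simp at this
  rw [Projectivization.mk_eq_mk_iff']
  refine ⟨w i * (∑ k, v k ^ 2) / (v i * (∑ k, w k ^ 2)), funext fun j => ?_⟩
  have hij := congrFun (congrFun h i) j
  simp only [rawF] at hij
  have := div_eq_div_iff (ne_of_gt hvs) (ne_of_gt hws) |>.mp hij
  simp only [Pi.smul_apply, smul_eq_mul]
  field_simp
  linear_combination (-1 : ℝ) * this

instance t2P2 : T2Space P2 := T2Space.of_injective_continuous injective_F continuous_F


lemma cont_mk' : Continuous (Projectivization.mk' ℝ : {v : Fin 3 → ℝ // v ≠ 0} → P2) :=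
  continuous_quotient_mk'

lemma rep_eq_smul (v : Fin 3 → ℝ) (hv : v ≠ 0) :
    ∃ a : ℝˣ, (Projectivization.mk ℝ v hv).rep = a • v := by
  obtain ⟨a, ha⟩ := Projectivization.exists_smul_eq_mk_rep ℝ v hv
  exact ⟨a, ha.symm⟩

lemma mem_lineAtInf_iff (v : Fin 3 → ℝ) (hv : v ≠ 0) :
    Projectivization.mk ℝ v hv ∈ lineAtInf ↔ v 0 = 0 := by
  obtain ⟨a, ha⟩ := rep_eq_smul v hv
  simp only [lineAtInf, Set.mem_setOf_eq, ha, Pi.smul_apply, smul_eq_mul]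
  constructor
  · intro h
    rcases mul_eq_zero.mp h with h | h
    · exact absurd h a.ne_zero
    · exact h
  · intro h; rw [h]; simp

lemma isClosed_lineAtInf : IsClosed lineAtInf := by
  rw [← isOpen_compl_iff]
  show IsOpen ((Projectivization.mk' ℝ) ⁻¹' (lineAtInfᶜ))
  have : (Projectivization.mk' ℝ) ⁻¹' (lineAtInfᶜ) = {v : {w : Fin 3 → ℝ // w ≠ 0} | v.1 0 ≠ 0} := by
    ext v
    simp only [Set.mem_preimage, Set.mem_compl_iff, Set.mem_setOf_eq, mk'_eq_mk]
    rw [mem_lineAtInf_iff v.1 v.2]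
  rw [this]
  have hc : Continuous (fun v : {w : Fin 3 → ℝ // w ≠ 0} => v.1 0) :=
    (continuous_apply 0).comp continuous_subtype_val
  exact isOpen_compl_iff.mpr (isClosed_eq hc continuous_const)

def liftv (p : ℝ × ℝ) : Fin 3 → ℝ := ![1, p.1, p.2]

lemma liftv_ne (p : ℝ × ℝ) : liftv p ≠ 0 := by
  intro h; have := congrFun h 0; simp [liftv] at this

lemma liftv_norm_ne (p : ℝ × ℝ) : ‖liftv p‖ ≠ 0 := norm_ne_zero_iff.mpr (liftv_ne p)

def nu (p : ℝ × ℝ) : Fin 3 → ℝ := ‖liftv p‖⁻¹ • liftv p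

lemma nu_norm (p : ℝ × ℝ) : ‖nu p‖ = 1 := by
  rw [nu, norm_smul, norm_inv, norm_norm, inv_mul_cancel₀ (liftv_norm_ne p)]

lemma nu_ne (p : ℝ × ℝ) : nu p ≠ 0 := by
  intro h
  have := nu_norm p
  rw [h] at this
  simp at this

lemma mk_nu (p : ℝ × ℝ) : Projectivization.mk ℝ (nu p) (nu_ne p) = embR2 p := by
  rw [embR2, Projectivization.mk_eq_mk_iff']
  exact ⟨‖liftv p‖⁻¹, rfl⟩

/-- Key closure lemma via compactness of the sphere. -/
lemma closure_emb_sub (S : Set (ℝ × ℝ)) :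
    closure (embR2 '' S) ⊆
      {q | ∃ v, ∃ h : v ≠ 0, v ∈ closure (nu '' S) ∧ q = Projectivization.mk ℝ v h} := by
  set K := closure (nu '' S) with hK
  have hKsphere : K ⊆ Metric.sphere (0 : Fin 3 → ℝ) 1 := by
    apply closure_minimal _ Metric.isClosed_sphere
    rintro v ⟨p, _, rfl⟩
    simp [nu_norm p]
  have hKne : ∀ v ∈ K, v ≠ 0 := by
    intro v hv h0
    have := hKsphere hv
    rw [h0] at this
    simp at this
  have hKcomp : IsCompact K := (isCompact_sphere 0 1).of_isClosed_subset isClosed_closure hKsphere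
  have hrange : K ⊆ Set.range (Subtype.val : {w : Fin 3 → ℝ // w ≠ 0} → (Fin 3 → ℝ)) := by
    intro v hv; exact ⟨⟨v, hKne v hv⟩, rfl⟩
  have hCcomp : IsCompact ((Subtype.val : {w : Fin 3 → ℝ // w ≠ 0} → (Fin 3 → ℝ)) ⁻¹' K) :=
    Topology.IsInducing.subtypeVal.isCompact_preimage' hKcomp hrange
  have hIm : IsCompact (Projectivization.mk' ℝ '' (Subtype.val ⁻¹' K)) :=
    hCcomp.image cont_mk'
  have hsub : embR2 '' S ⊆ Projectivization.mk' ℝ '' (Subtype.val ⁻¹' K) := by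
    rintro q ⟨p, hp, rfl⟩
    refine ⟨⟨nu p, nu_ne p⟩, ?_, ?_⟩
    · exact subset_closure (Set.mem_image_of_mem _ hp)
    · rw [mk'_eq_mk]; exact mk_nu p
  have hcl := closure_minimal hsub hIm.isClosed
  intro q hq
  obtain ⟨⟨v, hv⟩, hvK, rfl⟩ := hcl hq
  exact ⟨v, hv, hvK, by simp⟩

def hval (a b : ℝ) : ℝ × ℝ :=
  (a * ((b - 1) ^ 2 * b ^ 2 + 2 * (a - 1) ^ 2 * a) / (1 + a * (a - 1) ^ 2 * b * (b - 1) ^ 2),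
   b * ((a - 1) ^ 2 * a ^ 2 + 2 * (b - 1) ^ 2 * b) / (1 + a * (a - 1) ^ 2 * b * (b - 1) ^ 2))

def fval (p : ℝ × ℝ) : ℝ × ℝ :=
  ((fun p : ℝ × ℝ =>
      (p.1 * ((p.2 - 1) ^ 2 * p.2 ^ 2 + 2 * (p.1 - 1) ^ 2 * p.1) /
         (1 + p.1 * (p.1 - 1) ^ 2 * p.2 * (p.2 - 1) ^ 2),
       p.2 * ((p.1 - 1) ^ 2 * p.1 ^ 2 + 2 * (p.2 - 1) ^ 2 * p.2) /
         (1 + p.1 * (p.1 - 1) ^ 2 * p.2 * (p.2 - 1) ^ 2))) ∘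
    (fun p : ℝ × ℝ =>
      ((p.1 ^ 2 + 1) / (1 + p.1 ^ 2 * p.2 ^ 2),
       (p.2 ^ 2 + 1) / (1 + p.1 ^ 2 * p.2 ^ 2)))) p

def ga (x y : ℝ) : ℝ := (x ^ 2 + 1) / (1 + x ^ 2 * y ^ 2)

def gb (x y : ℝ) : ℝ := (y ^ 2 + 1) / (1 + x ^ 2 * y ^ 2)

lemma fval_eq (p : ℝ × ℝ) : fval p = hval (ga p.1 p.2) (gb p.1 p.2) := rfl

lemma ga_pos (x y : ℝ) : 0 < ga x y := by apply div_pos <;> positivity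

lemma gb_pos (x y : ℝ) : 0 < gb x y := by apply div_pos <;> positivity

lemma ga_big (x y : ℝ) (h : 3 ≤ ga x y) : gb x y ≤ 1 := by
  have hD : (0:ℝ) < 1 + x ^ 2 * y ^ 2 := by positivity
  rw [ga, le_div_iff₀ hD] at h
  rw [gb, div_le_one hD]
  nlinarith [sq_nonneg y, sq_nonneg (x*y)]

lemma gb_big (x y : ℝ) (h : 3 ≤ gb x y) : ga x y ≤ 1 := by
  have hD : (0:ℝ) < 1 + x ^ 2 * y ^ 2 := by positivity
  rw [gb, le_div_iff₀ hD] at h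
  rw [ga, div_le_one hD]
  nlinarith [sq_nonneg x, sq_nonneg (x*y)]

lemma hval_ineq (a b : ℝ) (ha : 0 < a) (hb : 0 < b) (hab : 3 ≤ a → b ≤ 1)
    (hba : 3 ≤ b → a ≤ 1) :
    0 ≤ (hval a b).1 ∧ 0 ≤ (hval a b).2 ∧
      min (hval a b).1 (hval a b).2 ≤ max (hval a b).1 (hval a b).2 / 2 + 180 := by
  have hprod : (0:ℝ) ≤ a * (a - 1) ^ 2 * b * (b - 1) ^ 2 := by positivity
  have hΔ0 : (0:ℝ) < 1 + a * (a - 1) ^ 2 * b * (b - 1) ^ 2 := by linarith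
  have hs0 : 0 ≤ (hval a b).1 := by
    apply div_nonneg _ (le_of_lt hΔ0)
    nlinarith [mul_nonneg (mul_nonneg (sq_nonneg (b-1)) (sq_nonneg b)) ha.le,
      mul_nonneg (mul_nonneg (sq_nonneg (a-1)) ha.le) ha.le]
  have ht0 : 0 ≤ (hval a b).2 := by
    apply div_nonneg _ (le_of_lt hΔ0)
    nlinarith [mul_nonneg (mul_nonneg (sq_nonneg (a-1)) (sq_nonneg a)) hb.le,
      mul_nonneg (mul_nonneg (sq_nonneg (b-1)) hb.le) hb.le]
  refine ⟨hs0, ht0, ?_⟩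
  rcases le_or_gt b 1 with hb1 | hb1
  · have key : 2 * (hval a b).2 - (hval a b).1 ≤ 4 := by
      have e : 2 * (hval a b).2 - (hval a b).1 =
          (2 * (b * ((a - 1) ^ 2 * a ^ 2 + 2 * (b - 1) ^ 2 * b))
            - a * ((b - 1) ^ 2 * b ^ 2 + 2 * (a - 1) ^ 2 * a)) /
          (1 + a * (a - 1) ^ 2 * b * (b - 1) ^ 2) := by
        simp only [hval]; ring
      rw [e, div_le_iff₀ hΔ0]
      have h1 : 0 ≤ a^2*(a-1)^2*(1-b) :=
        mul_nonneg (mul_nonneg (sq_nonneg a) (sq_nonneg (a-1))) (by linarith)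
      have h6 : 0 ≤ a*(b^2*(b-1)^2) :=
        mul_nonneg ha.le (mul_nonneg (sq_nonneg b) (sq_nonneg (b-1)))
      have h7 : b^2*(b-1)^2 ≤ 1 := by nlinarith [sq_nonneg (b - 1/2), sq_nonneg (b*(b-1)), mul_nonneg hb.le (sub_nonneg.mpr hb1)]
      nlinarith [h1, h6, h7, hprod]
    calc min (hval a b).1 (hval a b).2 ≤ (hval a b).2 := min_le_right _ _
      _ ≤ (hval a b).1 / 2 + 2 := by linarith
      _ ≤ max (hval a b).1 (hval a b).2 / 2 + 180 := by
          have := le_max_left (hval a b).1 (hval a b).2; linarith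
  · rcases le_or_gt a 1 with ha1 | ha1
    · have key : 2 * (hval a b).1 - (hval a b).2 ≤ 4 := by
        have e : 2 * (hval a b).1 - (hval a b).2 =
            (2 * (a * ((b - 1) ^ 2 * b ^ 2 + 2 * (a - 1) ^ 2 * a))
              - b * ((a - 1) ^ 2 * a ^ 2 + 2 * (b - 1) ^ 2 * b)) /
            (1 + a * (a - 1) ^ 2 * b * (b - 1) ^ 2) := by
          simp only [hval]; ring
        rw [e, div_le_iff₀ hΔ0]
        have h1 : 0 ≤ b^2*(b-1)^2*(1-a) :=
          mul_nonneg (mul_nonneg (sq_nonneg b) (sq_nonneg (b-1))) (by linarith)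
        have h6 : 0 ≤ b*(a^2*(a-1)^2) :=
          mul_nonneg hb.le (mul_nonneg (sq_nonneg a) (sq_nonneg (a-1)))
        have h7 : a^2*(a-1)^2 ≤ 1 := by nlinarith [sq_nonneg (a - 1/2), sq_nonneg (a*(a-1)), mul_nonneg ha.le (sub_nonneg.mpr ha1)]
        nlinarith [h1, h6, h7, hprod]
      calc min (hval a b).1 (hval a b).2 ≤ (hval a b).1 := min_le_left _ _
        _ ≤ (hval a b).2 / 2 + 2 := by linarith
        _ ≤ max (hval a b).1 (hval a b).2 / 2 + 180 := by
            have := le_max_right (hval a b).1 (hval a b).2; linarith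
    · have ha3 : a < 3 := by
        by_contra h
        push_neg at h
        exact absurd (hab h) (not_le.mpr hb1)
      have hb3 : b < 3 := by
        by_contra h
        push_neg at h
        exact absurd (hba h) (not_le.mpr ha1)
      have hsb : (hval a b).1 ≤ 180 := by
        show _ / _ ≤ (180:ℝ)
        rw [div_le_iff₀ hΔ0]
        have hbm : (b-1)^2 ≤ 4 := by nlinarith
        have hb2 : b^2 ≤ 9 := by nlinarith
        have ham : (a-1)^2 ≤ 4 := by nlinarith
        have ha2 : a^2 ≤ 9 := by nlinarith
        have e1 : (b-1)^2*b^2 ≤ 4*9 := mul_le_mul hbm hb2 (sq_nonneg b) (by norm_num)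
        have e2 : a*((b-1)^2*b^2) ≤ 3*(4*9) :=
          mul_le_mul ha3.le e1 (mul_nonneg (sq_nonneg _) (sq_nonneg _)) (by norm_num)
        have e5 : (a-1)^2*a^2 ≤ 4*9 := mul_le_mul ham ha2 (sq_nonneg a) (by norm_num)
        nlinarith [e2, e5, hprod]
      have hmax := le_max_right (hval a b).1 (hval a b).2
      calc min (hval a b).1 (hval a b).2 ≤ (hval a b).1 := min_le_left _ _
        _ ≤ 180 := hsb
        _ ≤ max (hval a b).1 (hval a b).2 / 2 + 180 := by linarith

variable {A B : ℕ → ℝ} {b0 : ℝ}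

lemma limQ (hA : Tendsto A atTop atTop) (hB : Tendsto B atTop (𝓝 b0)) :
    Tendsto (fun n => ((A n)⁻¹)^3 + (1 - (A n)⁻¹)^2*(B n)*(B n - 1)^2) atTop
      (𝓝 (b0*(b0-1)^2)) := by
  have hu : Tendsto (fun n => (A n)⁻¹) atTop (𝓝 0) := hA.inv_tendsto_atTop
  have : Tendsto (fun n => ((A n)⁻¹)^3 + (1 - (A n)⁻¹)^2*(B n)*(B n - 1)^2) atTop
      (𝓝 (0^3 + (1 - 0)^2*b0*(b0-1)^2)) := by
    apply Tendsto.add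
    · exact hu.pow 3
    · exact (((tendsto_const_nhds.sub hu).pow 2).mul hB).mul ((hB.sub tendsto_const_nhds).pow 2)
  convert this using 2
  ring

lemma limNum' (hA : Tendsto A atTop atTop) (hB : Tendsto B atTop (𝓝 b0)) :
    Tendsto (fun n => (B n)*(1 - (A n)⁻¹)^2 + 2*(B n - 1)^2*(B n)^2*((A n)⁻¹)^4) atTop
      (𝓝 b0) := by
  have hu : Tendsto (fun n => (A n)⁻¹) atTop (𝓝 0) := hA.inv_tendsto_atTop
  have : Tendsto (fun n => (B n)*(1 - (A n)⁻¹)^2 + 2*(B n - 1)^2*(B n)^2*((A n)⁻¹)^4) atTop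
      (𝓝 (b0*(1 - 0)^2 + 2*(b0 - 1)^2*b0^2*0^4)) := by
    apply Tendsto.add
    · exact hB.mul ((tendsto_const_nhds.sub hu).pow 2)
    · exact ((((hB.sub tendsto_const_nhds).pow 2).const_mul 2).mul (hB.pow 2)).mul (hu.pow 4)
  convert this using 2
  ring

lemma limDen' (hA : Tendsto A atTop atTop) (hB : Tendsto B atTop (𝓝 b0)) :
    Tendsto (fun n => ((A n)⁻¹)^3*(B n - 1)^2*(B n)^2 + 2*(1 - (A n)⁻¹)^2) atTop
      (𝓝 2) := by
  have hu : Tendsto (fun n => (A n)⁻¹) atTop (𝓝 0) := hA.inv_tendsto_atTop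
  have : Tendsto (fun n => ((A n)⁻¹)^3*(B n - 1)^2*(B n)^2 + 2*(1 - (A n)⁻¹)^2) atTop
      (𝓝 (0^3*(b0 - 1)^2*b0^2 + 2*(1 - 0)^2)) := by
    apply Tendsto.add
    · exact ((hu.pow 3).mul ((hB.sub tendsto_const_nhds).pow 2)).mul (hB.pow 2)
    · exact (tendsto_const_nhds.sub hu).pow 2 |>.const_mul 2
  simpa using this

lemma ev_hyp (hA : Tendsto A atTop atTop) (hB : Tendsto B atTop (𝓝 b0))
    (hb0 : 0 < b0) (hb1 : b0 < 1) :
    ∀ᶠ n in atTop, 2 ≤ A n ∧ 0 < B n ∧ B n < 1 := by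
  filter_upwards [hA.eventually_ge_atTop 2, hB (Ioo_mem_nhds hb0 hb1)] with n h1 h2
  exact ⟨h1, h2.1, h2.2⟩

lemma SS_identity {a b : ℝ} (ha : 2 ≤ a) (hb0 : 0 < b) (hb1 : b < 1) :
    (hval a b).1 = a * (((a⁻¹)^3*(b - 1)^2*b^2 + 2*(1 - a⁻¹)^2) /
      ((a⁻¹)^3 + (1 - a⁻¹)^2*b*(b - 1)^2)) := by
  have ha0 : a ≠ 0 := by linarith
  have hΔ : (0:ℝ) < 1 + a * (a - 1) ^ 2 * b * (b - 1) ^ 2 := by positivity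
  have hQ : (0:ℝ) < (a⁻¹)^3 + (1 - a⁻¹)^2*b*(b - 1)^2 := by positivity
  have h1 := hΔ.ne'
  have h2 := hQ.ne'
  rw [hval]
  simp only
  field_simp

lemma TT_identity {a b : ℝ} (ha : 2 ≤ a) (hb0 : 0 < b) (hb1 : b < 1) :
    (hval a b).2 / (hval a b).1 =
      (b*(1 - a⁻¹)^2 + 2*(b - 1)^2*b^2*(a⁻¹)^4) /
      ((a⁻¹)^3*(b - 1)^2*b^2 + 2*(1 - a⁻¹)^2) := by
  have ha0 : a ≠ 0 := by linarith
  have ha0' : (0:ℝ) < a := by linarith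
  have hΔ : (0:ℝ) < 1 + a * (a - 1) ^ 2 * b * (b - 1) ^ 2 := by positivity
  have hb1' : (b-1)^2 > 0 := by
    have : b - 1 ≠ 0 := by linarith
    positivity
  have hnum : (0:ℝ) < a * ((b - 1) ^ 2 * b ^ 2 + 2 * (a - 1) ^ 2 * a) := by
    have h3 : (0:ℝ) < (b-1)^2*b^2 := by
      have hb' : b - 1 ≠ 0 := by linarith
      have hbne : b ≠ 0 := hb0.ne'
      positivity
    have h4 : (0:ℝ) ≤ 2*(a-1)^2*a := by positivity
    nlinarith
  have hden' : (0:ℝ) < (a⁻¹)^3*(b - 1)^2*b^2 + 2*(1 - a⁻¹)^2 := by positivity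
  rw [hval]
  simp only
  rw [div_eq_div_iff (div_pos hnum hΔ).ne' hden'.ne']
  field_simp

lemma SS_tendsto (hA : Tendsto A atTop atTop) (hB : Tendsto B atTop (𝓝 b0))
    (hb0 : 0 < b0) (hb1 : b0 < 1) :
    Tendsto (fun n => (hval (A n) (B n)).1) atTop atTop := by
  have hq0 : (0:ℝ) < b0*(b0-1)^2 := by
    have : b0 - 1 ≠ 0 := by linarith
    positivity
  have hratio : Tendsto (fun n =>
      (((A n)⁻¹)^3*(B n - 1)^2*(B n)^2 + 2*(1 - (A n)⁻¹)^2) /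
      (((A n)⁻¹)^3 + (1 - (A n)⁻¹)^2*(B n)*(B n - 1)^2)) atTop
      (𝓝 (2 / (b0*(b0-1)^2))) :=
    (limDen' hA hB).div (limQ hA hB) hq0.ne'
  have hpos : (0:ℝ) < 2 / (b0*(b0-1)^2) := by positivity
  have hmain := hA.atTop_mul_pos hpos hratio
  apply hmain.congr'
  filter_upwards [ev_hyp hA hB hb0 hb1] with n hn
  exact (SS_identity hn.1 hn.2.1 hn.2.2).symm

lemma ratio_tendsto (hA : Tendsto A atTop atTop) (hB : Tendsto B atTop (𝓝 b0))
    (hb0 : 0 < b0) (hb1 : b0 < 1) :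
    Tendsto (fun n => (hval (A n) (B n)).2 / (hval (A n) (B n)).1) atTop (𝓝 (b0/2)) := by
  have hmain := (limNum' hA hB).div (limDen' hA hB) two_ne_zero
  apply hmain.congr'
  filter_upwards [ev_hyp hA hB hb0 hb1] with n hn
  exact (TT_identity hn.1 hn.2.1 hn.2.2).symm

lemma hval_swap (a b : ℝ) : hval b a = ((hval a b).2, (hval a b).1) := by
  simp only [hval, Prod.mk.injEq]
  constructor <;> ring_nf

def Ac (c : ℝ) (n : ℕ) : ℝ := ((n:ℝ)^2+1)/(1+c^2)
def Bc (c : ℝ) (n : ℕ) : ℝ := (c^2/(n:ℝ)^2+1)/(1+c^2)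

lemma Ac_tendsto (c : ℝ) : Tendsto (Ac c) atTop atTop := by
  apply Tendsto.atTop_div_const (by positivity)
  apply tendsto_atTop_add_const_right
  exact (tendsto_pow_atTop two_ne_zero).comp (tendsto_natCast_atTop_atTop (R := ℝ))

lemma Bc_tendsto (c : ℝ) : Tendsto (Bc c) atTop (𝓝 (1/(1+c^2))) := by
  have h1 : Tendsto (fun n : ℕ => c^2/(n:ℝ)^2) atTop (𝓝 0) := by
    apply Tendsto.div_atTop tendsto_const_nhds
    exact (tendsto_pow_atTop two_ne_zero).comp (tendsto_natCast_atTop_atTop (R := ℝ))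
  have h2 : Tendsto (fun n : ℕ => (c^2/(n:ℝ)^2 + 1)/(1+c^2)) atTop (𝓝 ((0+1)/(1+c^2))) :=
    (h1.add (tendsto_const_nhds (x := (1:ℝ)))).div_const (1+c^2)
  unfold Bc; simpa using h2

lemma ga_at (c : ℝ) (n : ℕ) (hn : 1 ≤ n) : ga (n:ℝ) (c/(n:ℝ)) = Ac c n := by
  have hn0 : ((n:ℝ)) ≠ 0 := by
    have : (1:ℝ) ≤ (n:ℝ) := by exact_mod_cast hn
    linarith
  rw [ga, Ac]
  congr 1
  field_simp

lemma gb_at (c : ℝ) (n : ℕ) (hn : 1 ≤ n) : gb (n:ℝ) (c/(n:ℝ)) = Bc c n := by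
  have hn0 : ((n:ℝ)) ≠ 0 := by
    have : (1:ℝ) ≤ (n:ℝ) := by exact_mod_cast hn
    linarith
  rw [gb, Bc]
  rw [div_eq_div_iff (by positivity) (by positivity)]
  field_simp

lemma ga_at' (c : ℝ) (n : ℕ) (hn : 1 ≤ n) : ga (c/(n:ℝ)) (n:ℝ) = Bc c n := by
  have hn0 : ((n:ℝ)) ≠ 0 := by
    have : (1:ℝ) ≤ (n:ℝ) := by exact_mod_cast hn
    linarith
  rw [ga, Bc]
  rw [div_eq_div_iff (by positivity) (by positivity)]
  field_simp

lemma gb_at' (c : ℝ) (n : ℕ) (hn : 1 ≤ n) : gb (c/(n:ℝ)) (n:ℝ) = Ac c n := by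
  have hn0 : ((n:ℝ)) ≠ 0 := by
    have : (1:ℝ) ≤ (n:ℝ) := by exact_mod_cast hn
    linarith
  rw [gb, Ac]
  rw [div_eq_div_iff (by positivity) (by positivity)]
  field_simp

lemma fval_at (c : ℝ) (n : ℕ) (hn : 1 ≤ n) :
    fval ((n:ℝ), c/(n:ℝ)) = hval (Ac c n) (Bc c n) := by
  rw [fval_eq]
  simp only
  rw [ga_at c n hn, gb_at c n hn]

lemma fval_at' (c : ℝ) (n : ℕ) (hn : 1 ≤ n) :
    fval (c/(n:ℝ), (n:ℝ)) = ((hval (Ac c n) (Bc c n)).2, (hval (Ac c n) (Bc c n)).1) := by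
  rw [fval_eq]
  simp only
  rw [ga_at' c n hn, gb_at' c n hn, hval_swap]

lemma b0_mem (c : ℝ) (hc : 0 < c) : 0 < 1/(1+c^2) ∧ 1/(1+c^2) < 1 := by
  constructor
  · positivity
  · rw [div_lt_one (by positivity)]
    nlinarith

/-- the vector `![0,1,v]` is nonzero -/
lemma vec1_ne (u v : ℝ) : (![0, u, v] : Fin 3 → ℝ) = 0 → v = 1 → False := by
  intro h hv
  have := congrFun h 2
  simp [hv] at this

lemma seg2_mem (c : ℝ) (hc : 0 < c) (h : (![0, 1, 1/(2*(1+c^2))] : Fin 3 → ℝ) ≠ 0) :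
    Projectivization.mk ℝ ![0, 1, 1/(2*(1+c^2))] h ∈ closure (embR2 '' Set.range fval) := by
  obtain ⟨hb0, hb1⟩ := b0_mem c hc
  set b0 : ℝ := 1/(1+c^2) with hb0def
  set SSn : ℕ → ℝ := fun n => (hval (Ac c n) (Bc c n)).1 with hSSdef
  set TTn : ℕ → ℝ := fun n => (hval (Ac c n) (Bc c n)).2 with hTTdef
  have hS : Tendsto SSn atTop atTop := SS_tendsto (Ac_tendsto c) (Bc_tendsto c) hb0 hb1
  have hR : Tendsto (fun n => TTn n / SSn n) atTop (𝓝 (b0/2)) :=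
    ratio_tendsto (Ac_tendsto c) (Bc_tendsto c) hb0 hb1
  have hinv : Tendsto (fun n => (SSn n)⁻¹) atTop (𝓝 0) := hS.inv_tendsto_atTop
  set w : ℕ → Fin 3 → ℝ := fun n => ![(SSn n)⁻¹, 1, TTn n / SSn n] with hwdef
  have hwne : ∀ n, w n ≠ 0 := by
    intro n h0
    have := congrFun h0 1
    simp [hwdef] at this
  have hv2 : b0/2 = 1/(2*(1+c^2)) := by
    have hcne : (1+c^2) ≠ 0 := by positivity
    rw [hb0def]
    field_simp
  have hwlim : Tendsto w atTop (𝓝 (![0, 1, 1/(2*(1+c^2))])) := by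
    rw [tendsto_pi_nhds]
    intro i
    fin_cases i
    · simpa [hwdef] using hinv
    · simpa [hwdef] using (tendsto_const_nhds : Tendsto (fun _ : ℕ => (1:ℝ)) atTop _)
    · rw [← hv2] at *
      simpa [hwdef] using hR
  have hsub : Tendsto (fun n => (⟨w n, hwne n⟩ : {v : Fin 3 → ℝ // v ≠ 0})) atTop
      (𝓝 ⟨![0, 1, 1/(2*(1+c^2))], h⟩) := tendsto_subtype_rng.mpr hwlim
  have hmk : Tendsto (fun n => Projectivization.mk' ℝ (⟨w n, hwne n⟩ : {v : Fin 3 → ℝ // v ≠ 0}))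
      atTop (𝓝 (Projectivization.mk' ℝ ⟨![0, 1, 1/(2*(1+c^2))], h⟩)) :=
    (cont_mk'.tendsto _).comp hsub
  rw [mk'_eq_mk] at hmk
  apply mem_closure_of_tendsto hmk
  filter_upwards [hS.eventually_ge_atTop 1, eventually_ge_atTop 1] with n hSn hn
  have hSne : SSn n ≠ 0 := by linarith
  have : Projectivization.mk' ℝ (⟨w n, hwne n⟩ : {v : Fin 3 → ℝ // v ≠ 0}) =
      embR2 (fval ((n:ℝ), c/(n:ℝ))) := by
    rw [mk'_eq_mk, embR2, Projectivization.mk_eq_mk_iff']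
    refine ⟨(SSn n)⁻¹, funext fun i => ?_⟩
    rw [fval_at c n hn]
    fin_cases i
    · simp [hwdef]
    · simp only [hwdef, Pi.smul_apply, smul_eq_mul, Matrix.cons_val_one, Matrix.head_cons]
      exact inv_mul_cancel₀ hSne
    · simp only [hwdef, Pi.smul_apply, smul_eq_mul]
      show (SSn n)⁻¹ * TTn n = _
      rw [inv_mul_eq_div]
      rfl
  rw [this]
  exact Set.mem_image_of_mem _ (Set.mem_range_self _)

lemma seg1_mem (c : ℝ) (hc : 0 < c) (h : (![0, 1/(2*(1+c^2)), 1] : Fin 3 → ℝ) ≠ 0) :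
    Projectivization.mk ℝ ![0, 1/(2*(1+c^2)), 1] h ∈ closure (embR2 '' Set.range fval) := by
  obtain ⟨hb0, hb1⟩ := b0_mem c hc
  set b0 : ℝ := 1/(1+c^2) with hb0def
  set SSn : ℕ → ℝ := fun n => (hval (Ac c n) (Bc c n)).1 with hSSdef
  set TTn : ℕ → ℝ := fun n => (hval (Ac c n) (Bc c n)).2 with hTTdef
  have hS : Tendsto SSn atTop atTop := SS_tendsto (Ac_tendsto c) (Bc_tendsto c) hb0 hb1
  have hR : Tendsto (fun n => TTn n / SSn n) atTop (𝓝 (b0/2)) :=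
    ratio_tendsto (Ac_tendsto c) (Bc_tendsto c) hb0 hb1
  have hinv : Tendsto (fun n => (SSn n)⁻¹) atTop (𝓝 0) := hS.inv_tendsto_atTop
  set w : ℕ → Fin 3 → ℝ := fun n => ![(SSn n)⁻¹, TTn n / SSn n, 1] with hwdef
  have hwne : ∀ n, w n ≠ 0 := by
    intro n h0
    have := congrFun h0 2
    simp [hwdef] at this
  have hv2 : b0/2 = 1/(2*(1+c^2)) := by
    have hcne : (1+c^2) ≠ 0 := by positivity
    rw [hb0def]
    field_simp
  have hwlim : Tendsto w atTop (𝓝 (![0, 1/(2*(1+c^2)), 1])) := by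
    rw [tendsto_pi_nhds]
    intro i
    fin_cases i
    · simpa [hwdef] using hinv
    · rw [← hv2] at *
      simpa [hwdef] using hR
    · simpa [hwdef] using (tendsto_const_nhds : Tendsto (fun _ : ℕ => (1:ℝ)) atTop _)
  have hsub : Tendsto (fun n => (⟨w n, hwne n⟩ : {v : Fin 3 → ℝ // v ≠ 0})) atTop
      (𝓝 ⟨![0, 1/(2*(1+c^2)), 1], h⟩) := tendsto_subtype_rng.mpr hwlim
  have hmk : Tendsto (fun n => Projectivization.mk' ℝ (⟨w n, hwne n⟩ : {v : Fin 3 → ℝ // v ≠ 0}))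
      atTop (𝓝 (Projectivization.mk' ℝ ⟨![0, 1/(2*(1+c^2)), 1], h⟩)) :=
    (cont_mk'.tendsto _).comp hsub
  rw [mk'_eq_mk] at hmk
  apply mem_closure_of_tendsto hmk
  filter_upwards [hS.eventually_ge_atTop 1, eventually_ge_atTop 1] with n hSn hn
  have hSne : SSn n ≠ 0 := by linarith
  have : Projectivization.mk' ℝ (⟨w n, hwne n⟩ : {v : Fin 3 → ℝ // v ≠ 0}) =
      embR2 (fval (c/(n:ℝ), (n:ℝ))) := by
    rw [mk'_eq_mk, embR2, Projectivization.mk_eq_mk_iff']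
    refine ⟨(SSn n)⁻¹, funext fun i => ?_⟩
    rw [fval_at' c n hn]
    fin_cases i
    · simp [hwdef]
    · simp only [hwdef, Pi.smul_apply, smul_eq_mul]
      show (SSn n)⁻¹ * TTn n = _
      rw [inv_mul_eq_div]
      rfl
    · simp only [hwdef, Pi.smul_apply, smul_eq_mul, Matrix.cons_val_two, Matrix.tail_cons, Matrix.head_cons]
      exact inv_mul_cancel₀ hSne
  rw [this]
  exact Set.mem_image_of_mem _ (Set.mem_range_self _)

lemma key_ineq (z : ℝ × ℝ) :
    0 ≤ (fval z).1 ∧ 0 ≤ (fval z).2 ∧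
      min (fval z).1 (fval z).2 ≤ max (fval z).1 (fval z).2 / 2 + 180 := by
  rw [fval_eq]
  exact hval_ineq _ _ (ga_pos _ _) (gb_pos _ _) (fun h3 => ga_big _ _ h3)
    (fun h3 => gb_big _ _ h3)

lemma param_exists (v : ℝ) (h0 : 0 < v) (h2 : v < 1/2) :
    ∃ c : ℝ, 0 < c ∧ 1/(2*(1+c^2)) = v := by
  have hx : 0 < 1/(2*v) - 1 := by
    rw [lt_sub_iff_add_lt, zero_add, lt_div_iff₀ (by linarith)]
    linarith
  refine ⟨Real.sqrt (1/(2*v) - 1), Real.sqrt_pos.mpr hx, ?_⟩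
  rw [Real.sq_sqrt hx.le]
  field_simp
  ring

lemma seg1_mem' (v : ℝ) (h0 : 0 < v) (h2 : v < 1/2) (hne : (![0, v, 1] : Fin 3 → ℝ) ≠ 0) :
    Projectivization.mk ℝ ![0, v, 1] hne ∈ closure (embR2 '' Set.range fval) := by
  obtain ⟨c, hc, hv⟩ := param_exists v h0 h2
  subst hv
  exact seg1_mem c hc _

lemma seg2_mem' (v : ℝ) (h0 : 0 < v) (h2 : v < 1/2) (hne : (![0, 1, v] : Fin 3 → ℝ) ≠ 0) :
    Projectivization.mk ℝ ![0, 1, v] hne ∈ closure (embR2 '' Set.range fval) := by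
  obtain ⟨c, hc, hv⟩ := param_exists v h0 h2
  subst hv
  exact seg2_mem c hc _

lemma useq_facts (u : ℝ) (hu0 : 0 ≤ u) (hu2 : u ≤ 1/2) :
    (∀ k : ℕ, 0 < u + (1/4 - u)/((k:ℝ)+2) ∧ u + (1/4 - u)/((k:ℝ)+2) < 1/2) ∧
      Tendsto (fun k : ℕ => u + (1/4 - u)/((k:ℝ)+2)) atTop (𝓝 u) := by
  constructor
  · intro k
    have hk2 : (0:ℝ) < (k:ℝ)+2 := by positivity
    have hl1 : (1:ℝ)/((k:ℝ)+2) ≤ 1/2 := by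
      rw [div_le_div_iff₀ hk2 (by norm_num)]
      have : (0:ℝ) ≤ (k:ℝ) := Nat.cast_nonneg k
      linarith
    have hl0 : (0:ℝ) < 1/((k:ℝ)+2) := by positivity
    have he : u + (1/4 - u)/((k:ℝ)+2) = u * (1 - 1/((k:ℝ)+2)) + (1/((k:ℝ)+2))/4 := by
      field_simp
      ring
    rw [he]
    constructor
    · have h1 : 0 ≤ u * (1 - 1/((k:ℝ)+2)) := mul_nonneg hu0 (by linarith)
      linarith
    · have h1 : u * (1 - 1/((k:ℝ)+2)) ≤ (1/2) * (1 - 1/((k:ℝ)+2)) :=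
        mul_le_mul_of_nonneg_right hu2 (by linarith)
      linarith
  · have h1 : Tendsto (fun k : ℕ => (1/4 - u)/((k:ℝ)+2)) atTop (𝓝 0) := by
      apply Tendsto.div_atTop tendsto_const_nhds
      exact tendsto_atTop_add_const_right _ 2 (tendsto_natCast_atTop_atTop (R := ℝ))
    have := (tendsto_const_nhds (x := u) (f := atTop (α := ℕ))).add h1
    simpa using this

lemma seg1_closed_mem (u : ℝ) (hu0 : 0 ≤ u) (hu2 : u ≤ 1/2)
    (hne : (![0, u, 1] : Fin 3 → ℝ) ≠ 0) :
    Projectivization.mk ℝ ![0, u, 1] hne ∈ closure (embR2 '' Set.range fval) := by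
  obtain ⟨hbnd, hlim⟩ := useq_facts u hu0 hu2
  set uk : ℕ → ℝ := fun k => u + (1/4 - u)/((k:ℝ)+2) with hukdef
  have hne' : ∀ k, (![0, uk k, 1] : Fin 3 → ℝ) ≠ 0 := by
    intro k h0
    have := congrFun h0 2
    simp at this
  have hwlim : Tendsto (fun k => (![0, uk k, 1] : Fin 3 → ℝ)) atTop (𝓝 ![0, u, 1]) := by
    rw [tendsto_pi_nhds]
    intro i
    fin_cases i
    · simpa using (tendsto_const_nhds : Tendsto (fun _ : ℕ => (0:ℝ)) atTop _)
    · simpa using hlim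
    · simpa using (tendsto_const_nhds : Tendsto (fun _ : ℕ => (1:ℝ)) atTop _)
  have hsub : Tendsto (fun k => (⟨![0, uk k, 1], hne' k⟩ : {v : Fin 3 → ℝ // v ≠ 0})) atTop
      (𝓝 ⟨![0, u, 1], hne⟩) := tendsto_subtype_rng.mpr hwlim
  have hmk := (cont_mk'.tendsto _).comp hsub
  rw [mk'_eq_mk] at hmk
  apply isClosed_closure.mem_of_tendsto hmk
  filter_upwards with k
  simp only [Function.comp_apply, mk'_eq_mk]
  exact seg1_mem' (uk k) (hbnd k).1 (hbnd k).2 _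

lemma seg2_closed_mem (u : ℝ) (hu0 : 0 ≤ u) (hu2 : u ≤ 1/2)
    (hne : (![0, 1, u] : Fin 3 → ℝ) ≠ 0) :
    Projectivization.mk ℝ ![0, 1, u] hne ∈ closure (embR2 '' Set.range fval) := by
  obtain ⟨hbnd, hlim⟩ := useq_facts u hu0 hu2
  set uk : ℕ → ℝ := fun k => u + (1/4 - u)/((k:ℝ)+2) with hukdef
  have hne' : ∀ k, (![0, 1, uk k] : Fin 3 → ℝ) ≠ 0 := by
    intro k h0
    have := congrFun h0 1
    simp at this
  have hwlim : Tendsto (fun k => (![0, 1, uk k] : Fin 3 → ℝ)) atTop (𝓝 ![0, 1, u]) := by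
    rw [tendsto_pi_nhds]
    intro i
    fin_cases i
    · simpa using (tendsto_const_nhds : Tendsto (fun _ : ℕ => (0:ℝ)) atTop _)
    · simpa using (tendsto_const_nhds : Tendsto (fun _ : ℕ => (1:ℝ)) atTop _)
    · simpa using hlim
  have hsub : Tendsto (fun k => (⟨![0, 1, uk k], hne' k⟩ : {v : Fin 3 → ℝ // v ≠ 0})) atTop
      (𝓝 ⟨![0, 1, u], hne⟩) := tendsto_subtype_rng.mpr hwlim
  have hmk := (cont_mk'.tendsto _).comp hsub
  rw [mk'_eq_mk] at hmk
  apply isClosed_closure.mem_of_tendsto hmk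
  filter_upwards with k
  simp only [Function.comp_apply, mk'_eq_mk]
  exact seg2_mem' (uk k) (hbnd k).1 (hbnd k).2 _

end Aux19

theorem stmt19 :
    ∃ f : ℝ × ℝ → ℝ × ℝ,
      (f = (fun p : ℝ × ℝ =>
          (p.1 * ((p.2 - 1) ^ 2 * p.2 ^ 2 + 2 * (p.1 - 1) ^ 2 * p.1) /
             (1 + p.1 * (p.1 - 1) ^ 2 * p.2 * (p.2 - 1) ^ 2),
           p.2 * ((p.1 - 1) ^ 2 * p.1 ^ 2 + 2 * (p.2 - 1) ^ 2 * p.2) /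
             (1 + p.1 * (p.1 - 1) ^ 2 * p.2 * (p.2 - 1) ^ 2))) ∘
        (fun p : ℝ × ℝ =>
          ((p.1 ^ 2 + 1) / (1 + p.1 ^ 2 * p.2 ^ 2),
           (p.2 ^ 2 + 1) / (1 + p.1 ^ 2 * p.2 ^ 2)))) ∧
      ptsAtInf (Set.range f) =
        {q | ∃ u : ℝ, 0 ≤ u ∧ u ≤ 1 / 2 ∧
            q = Projectivization.mk ℝ ![0, u, 1]
              (by intro hv; have := congrFun hv 2; simp at this)} ∪
        {q | ∃ v : ℝ, 0 ≤ v ∧ v ≤ 1 / 2 ∧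
            q = Projectivization.mk ℝ ![0, 1, v]
              (by intro hv; have := congrFun hv 1; simp at this)} := by
    classical
  refine ⟨Aux19.fval, rfl, ?_⟩
  ext q
  constructor
  · rintro ⟨hqc, hqi⟩
    obtain ⟨v, hv, hvK, rfl⟩ := Aux19.closure_emb_sub _ hqc
    have hv0 : v 0 = 0 := (Aux19.mem_lineAtInf_iff v hv).mp hqi
    rw [mem_closure_iff_seq_limit] at hvK
    obtain ⟨x, hxmem, hxlim⟩ := hvK
    choose p hp hnup using fun n => hxmem n
    have hkey : ∀ n, 0 ≤ (p n).1 ∧ 0 ≤ (p n).2 ∧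
        min (p n).1 (p n).2 ≤ max (p n).1 (p n).2 / 2 + 180 := by
      intro n
      obtain ⟨z, hz⟩ := hp n
      rw [← hz]
      exact Aux19.key_ineq z
    have hx0 : ∀ n, x n 0 = ‖Aux19.liftv (p n)‖⁻¹ := by
      intro n
      rw [← hnup n, Aux19.nu]
      simp [Aux19.liftv]
    have hx1 : ∀ n, x n 1 = ‖Aux19.liftv (p n)‖⁻¹ * (p n).1 := by
      intro n
      rw [← hnup n, Aux19.nu]
      simp [Aux19.liftv]
    have hx2 : ∀ n, x n 2 = ‖Aux19.liftv (p n)‖⁻¹ * (p n).2 := by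
      intro n
      rw [← hnup n, Aux19.nu]
      simp [Aux19.liftv]
    have hrpos : ∀ n, 0 ≤ ‖Aux19.liftv (p n)‖⁻¹ := fun n => by positivity
    have hptw : ∀ n, min (x n 1) (x n 2) ≤ max (x n 1) (x n 2) / 2 + 180 * x n 0 := by
      intro n
      obtain ⟨hs, ht, hm⟩ := hkey n
      rw [hx0 n, hx1 n, hx2 n]
      set r := ‖Aux19.liftv (p n)‖⁻¹ with hrdef
      have hr := hrpos n
      rw [← mul_min_of_nonneg _ _ hr, ← mul_max_of_nonneg _ _ hr]
      have := mul_le_mul_of_nonneg_left hm hr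
      linarith [this]
    have hlim0 : Tendsto (fun n => x n 0) atTop (𝓝 (v 0)) := tendsto_pi_nhds.mp hxlim 0
    have hlim1 : Tendsto (fun n => x n 1) atTop (𝓝 (v 1)) := tendsto_pi_nhds.mp hxlim 1
    have hlim2 : Tendsto (fun n => x n 2) atTop (𝓝 (v 2)) := tendsto_pi_nhds.mp hxlim 2
    have hv1 : 0 ≤ v 1 := ge_of_tendsto' hlim1 fun n => by
      rw [hx1 n]; exact mul_nonneg (hrpos n) (hkey n).1
    have hv2 : 0 ≤ v 2 := ge_of_tendsto' hlim2 fun n => by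
      rw [hx2 n]; exact mul_nonneg (hrpos n) (hkey n).2.1
    have hmm : min (v 1) (v 2) ≤ max (v 1) (v 2) / 2 + 180 * v 0 := by
      apply le_of_tendsto_of_tendsto' (hlim1.min hlim2)
        (((hlim1.max hlim2).div_const 2).add (hlim0.const_mul 180)) hptw
    rw [hv0] at hmm
    simp only [mul_zero, add_zero] at hmm
    rcases le_total (v 2) (v 1) with hcmp | hcmp
    · -- q in second set
      have hminv : min (v 1) (v 2) = v 2 := min_eq_right hcmp
      have hmaxv : max (v 1) (v 2) = v 1 := max_eq_left hcmp
      rw [hminv, hmaxv] at hmm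
      have hv1pos : 0 < v 1 := by
        rcases lt_or_eq_of_le hv1 with h | h
        · exact h
        · exfalso
          apply hv
          have h2 : v 2 = 0 := le_antisymm (by linarith [hmm]) hv2
          funext i
          fin_cases i
          · exact hv0
          · exact h.symm
          · exact h2
      refine Or.inr ⟨v 2 / v 1, div_nonneg hv2 hv1pos.le, ?_, ?_⟩
      · rw [div_le_iff₀ hv1pos]
        linarith
      · rw [Projectivization.mk_eq_mk_iff']
        refine ⟨v 1, funext fun i => ?_⟩
        fin_cases i
        · simp [hv0]
        · simp
        · simp [mul_div_cancel₀ _ hv1pos.ne']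
    · -- q in first set
      have hminv : min (v 1) (v 2) = v 1 := min_eq_left hcmp
      have hmaxv : max (v 1) (v 2) = v 2 := max_eq_right hcmp
      rw [hminv, hmaxv] at hmm
      have hv2pos : 0 < v 2 := by
        rcases lt_or_eq_of_le hv2 with h | h
        · exact h
        · exfalso
          apply hv
          have h2 : v 1 = 0 := le_antisymm (by linarith [hmm]) hv1
          funext i
          fin_cases i
          · exact hv0
          · exact h2
          · exact h.symm
      refine Or.inl ⟨v 1 / v 2, div_nonneg hv1 hv2pos.le, ?_, ?_⟩
      · rw [div_le_iff₀ hv2pos]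
        linarith
      · rw [Projectivization.mk_eq_mk_iff']
        refine ⟨v 2, funext fun i => ?_⟩
        fin_cases i
        · simp [hv0]
        · simp [mul_div_cancel₀ _ hv2pos.ne']
        · simp
  · rintro (⟨u, hu0, hu2, rfl⟩ | ⟨u, hu0, hu2, rfl⟩)
    · refine ⟨Aux19.seg1_closed_mem u hu0 hu2 _, ?_⟩
      rw [Aux19.mem_lineAtInf_iff]
      simp
    · refine ⟨Aux19.seg2_closed_mem u hu0 hu2 _, ?_⟩
      rw [Aux19.mem_lineAtInf_iff]
      simp
end
end
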